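/- arXiv:2203.06423 — 11 statements merged into one kernel-verified Lean document; each statement's English description precedes it below -/
import Mathlib

section
/- Let G be a ((K1 ∪ K2) + Kp)-free graph with clique number ω(G) ≥ p+2 for some p ≥ 1, and let A = {v1,...,vω} be a maximum clique of G. For each k, let I_k be the set of vertices outside A adjacent to every vertex of A except v_k. Then for any k ≠ ℓ, every vertex of I_k is adjacent to every vertex of I_ℓ. -/
open SimpleGraph

/-- The join of two graphs: all cross edges present. -/
def joinG {α β : Type*} (G : SimpleGraph α) (H : SimpleGraph β) : SimpleGraph (α ⊕ β) :=
  SimpleGraph.fromRel (fun x y => match x, y with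
    | Sum.inl a, Sum.inl b => G.Adj a b
    | Sum.inr a, Sum.inr b => H.Adj a b
    | Sum.inl _, Sum.inr _ => True
    | _, _ => False)

/-- The graph `P₃ ∪ P₂`: disjoint union of a path on 3 vertices and an edge. -/
def P3P2 : SimpleGraph (Fin 3 ⊕ Fin 2) := pathGraph 3 ⊕g pathGraph 2

/-- The graph `K₁ ∪ K₂`: disjoint union of a vertex and an edge. -/
def K1K2 : SimpleGraph (Fin 1 ⊕ Fin 2) := (⊥ : SimpleGraph (Fin 1)) ⊕g (⊤ : SimpleGraph (Fin 2))

/-- The graph `(K₁ ∪ K₂) + Kₚ`: join of `K₁ ∪ K₂` with a complete graph on `p` vertices. -/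
def K1K2Kp (p : ℕ) : SimpleGraph ((Fin 1 ⊕ Fin 2) ⊕ Fin p) := joinG K1K2 (⊤ : SimpleGraph (Fin p))

/-- The graph `2K₁ + Kₚ`: join of two isolated vertices with a complete graph on `p` vertices. -/
def twoK1Kp (p : ℕ) : SimpleGraph (Fin 2 ⊕ Fin p) :=
  joinG (⊥ : SimpleGraph (Fin 2)) (⊤ : SimpleGraph (Fin p))

/-- The HVN graph: `(K₁ ∪ K₂) + K₂`. -/
def HVN : SimpleGraph ((Fin 1 ⊕ Fin 2) ⊕ Fin 2) := K1K2Kp 2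

/-- The diamond: `2K₁ + K₂`, i.e. `K₄` minus an edge. -/
def diamond : SimpleGraph (Fin 2 ⊕ Fin 2) := twoK1Kp 2

/-- The paw: `(K₁ ∪ K₂) + K₁`. -/
def paw : SimpleGraph ((Fin 1 ⊕ Fin 2) ⊕ Fin 1) := K1K2Kp 1

/-- `G` is `H`-free if it has no induced subgraph isomorphic to `H`,
i.e. there is no graph embedding of `H` into `G`. -/
def Free {α β : Type*} (H : SimpleGraph α) (G : SimpleGraph β) : Prop :=
  ¬ Nonempty (H ↪g G)

theorem stmt_1 {V : Type*} [Fintype V] (G : SimpleGraph V) (p : ℕ) (hp : 1 ≤ p)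
    (hfree : _root_.Free (K1K2Kp p) G) (hω : p + 2 ≤ G.cliqueNum)
    (v : Fin G.cliqueNum → V) (hinj : Function.Injective v)
    (hclique : G.IsClique (Set.range v))
    (k ℓ : Fin G.cliqueNum) (hkl : k ≠ ℓ) (x y : V)
    (hxA : x ∉ Set.range v) (hx : ∀ i, i ≠ k → G.Adj x (v i))
    (hyA : y ∉ Set.range v) (hy : ∀ i, i ≠ ℓ → G.Adj y (v i)) :
    G.Adj x y := by
  classical
  by_contra hxy
  -- no vertex outside A can be adjacent to all of A
  have hfull : ∀ w, w ∉ Set.range v → (∀ i, G.Adj w (v i)) → False := by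
    intro w hwA hwadj
    set s : Finset V := Finset.univ.image v with hs
    have hws : w ∉ s := by
      simp only [hs, Finset.mem_image] at *
      rintro ⟨i, -, rfl⟩
      exact hwA ⟨i, rfl⟩
    have hscoe : (s : Set V) = Set.range v := by
      simp [hs]
    have hclique' : G.IsClique (insert w (s : Set V)) := by
      rw [isClique_insert]
      refine ⟨hscoe ▸ hclique, ?_⟩
      intro b hb hne
      rw [hscoe] at hb
      obtain ⟨i, rfl⟩ := hb
      exact hwadj i
    have hcard : (insert w s).card = G.cliqueNum + 1 := by
      rw [Finset.card_insert_of_notMem hws, hs,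
        Finset.card_image_of_injective _ hinj]
      simp
    have := IsClique.card_le_cliqueNum (G := G) (t := insert w s)
      (tc := by rwa [Finset.coe_insert])
    omega
  have hxyne : x ≠ y := by
    rintro rfl
    exact hfull x hxA fun i => by
      by_cases hi : i = ℓ
      · exact hx i (hi ▸ hkl.symm)
      · exact hy i hi
  have hylℓ : ¬ G.Adj y (v ℓ) := by
    intro h
    exact hfull y hyA fun i => by
      by_cases hi : i = ℓ
      · exact hi ▸ h
      · exact hy i hi
  have hxℓ : G.Adj x (v ℓ) := hx ℓ hkl.symm
  have hyvlne : y ≠ v ℓ := fun h => hyA ⟨ℓ, h.symm⟩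
  have hxvlne : x ≠ v ℓ := fun h => hxA ⟨ℓ, h.symm⟩
  -- choose p vertices of A avoiding k and ℓ
  have hscard : p ≤ ({k, ℓ}ᶜ : Finset (Fin G.cliqueNum)).card := by
    rw [Finset.card_compl, Finset.card_insert_of_notMem (by simpa using hkl),
      Finset.card_singleton]
    simp only [Fintype.card_fin]
    omega
  let g := Finset.orderEmbOfCardLe _ hscard
  have hgmem : ∀ i, g i ≠ k ∧ g i ≠ ℓ := by
    intro i
    have h1 := Finset.orderEmbOfCardLe_mem _ hscard i
    rw [Finset.mem_compl, Finset.mem_insert, Finset.mem_singleton] at h1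
    exact not_or.mp h1
  have hvgx : ∀ i, v (g i) ≠ x := fun i h => hxA ⟨g i, h⟩
  have hvgy : ∀ i, v (g i) ≠ y := fun i h => hyA ⟨g i, h⟩
  have hvadj : ∀ i j : Fin G.cliqueNum, i ≠ j → G.Adj (v i) (v j) := by
    intro i j hij
    exact hclique ⟨i, rfl⟩ ⟨j, rfl⟩ (fun h => hij (hinj h))
  have hyg : ∀ i, G.Adj y (v (g i)) := fun i => hy _ (hgmem i).2
  have hxg : ∀ i, G.Adj x (v (g i)) := fun i => hx _ (hgmem i).1
  have hlg : ∀ i, G.Adj (v ℓ) (v (g i)) := fun i => hvadj _ _ (Ne.symm (hgmem i).2)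
  have hgg : ∀ i j, i ≠ j → G.Adj (v (g i)) (v (g j)) := fun i j h =>
    hvadj _ _ (fun e => h (g.injective e))
  let f : (Fin 1 ⊕ Fin 2) ⊕ Fin p → V :=
    Sum.elim (Sum.elim (fun _ => y) ![x, v ℓ]) (fun i => v (g i))
  refine hfree ⟨⟨⟨f, ?_⟩, ?_⟩⟩
  · rintro ((a | a) | a) ((b | b) | b) hab <;>
      simp only [f, Sum.elim_inl, Sum.elim_inr] at hab
    · exact congrArg _ (congrArg _ (Subsingleton.elim a b))
    · fin_cases b <;> simp only [Matrix.cons_val_zero, Matrix.cons_val_one,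
        Matrix.head_cons] at hab
      · exact absurd hab.symm hxyne
      · exact absurd hab hyvlne
    · exact absurd hab (hvgy b).symm.elim
    · fin_cases a <;> simp only [Matrix.cons_val_zero, Matrix.cons_val_one,
        Matrix.head_cons] at hab
      · exact absurd hab hxyne.elim
      · exact absurd hab.symm hyvlne.elim
    · fin_cases a <;> fin_cases b <;> simp only [Matrix.cons_val_zero,
        Matrix.cons_val_one, Matrix.head_cons] at hab <;> first
        | rfl
        | exact absurd hab hxvlne.elim
        | exact absurd hab.symm hxvlne.elim
    · fin_cases a <;> simp only [Matrix.cons_val_zero, Matrix.cons_val_one,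
        Matrix.head_cons] at hab
      · exact absurd hab (fun h => hxA ⟨g b, h.symm⟩)
      · exact absurd ((hgmem b).2 (hinj hab.symm)) (fun h => h)
    · exact absurd hab (hvgy a).elim
    · fin_cases b <;> simp only [Matrix.cons_val_zero, Matrix.cons_val_one,
        Matrix.head_cons] at hab
      · exact absurd hab (hvgx a).elim
      · exact absurd ((hgmem a).2 (hinj hab)) (fun h => h)
    · exact congrArg Sum.inr (g.injective (hinj hab))
  · rintro ((a | a) | a) ((b | b) | b) <;>
      simp only [f, Sum.elim_inl, Sum.elim_inr, K1K2Kp, joinG, K1K2,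
        fromRel_adj, SimpleGraph.sum_adj]
    · fin_cases a <;> fin_cases b <;> simp
    · fin_cases b <;> simp
      · exact fun h => hxy h.symm
      · exact hylℓ
    · simp [hyg b]
      exact hyg b
    · fin_cases a <;> simp
      · exact hxy
      · exact fun h => hylℓ h.symm
    · fin_cases a <;> fin_cases b <;> simp [hxℓ, hxℓ.symm]
      exacts [hxℓ, hxℓ.symm]
    · fin_cases a <;> simp [hxg b, hlg b]
      exacts [hxg b, hlg b]
    · simp [(hyg a).symm]
      exact (hyg a).symm
    · fin_cases b <;> simp [(hxg a).symm, (hlg a).symm]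
      exacts [(hxg a).symm, (hlg a).symm]
    · simp only [top_adj, ne_eq, Sum.inr.injEq]
      constructor
      · intro h
        have hab : a ≠ b := fun e => G.irrefl (e ▸ h)
        exact ⟨hab, Or.inl hab⟩
      · rintro ⟨h, -⟩
        exact hgg a b h
end

section
/- Let G be a ((K1 ∪ K2) + Kp)-free graph with ω(G) ≥ p+2, p ≥ 1, and let A = {v1,...,vω} be a maximum clique. Then there is no vertex x outside A such that x is nonadjacent to both v_i and v_j for some i < j with j ≥ p+2, and x is adjacent to all of v1,...,v_{j-1} except v_i. Equivalently, in the Wagon partition, C_{i,j} = ∅ for all j ≥ p+2. -/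
open SimpleGraph

theorem stmt_2 {V : Type*} [Fintype V] (G : SimpleGraph V) (p : ℕ) (hp : 1 ≤ p)
    (hfree : _root_.Free (K1K2Kp p) G) (hω : p + 2 ≤ G.cliqueNum)
    (v : Fin G.cliqueNum → V) (hinj : Function.Injective v)
    (hclique : G.IsClique (Set.range v))
    (i j : Fin G.cliqueNum) (hij : i < j) (hj : p + 2 ≤ (j : ℕ) + 1)
    (x : V) (hxA : x ∉ Set.range v)
    (hxi : ¬ G.Adj x (v i)) (hxj : ¬ G.Adj x (v j))
    (hadj : ∀ k, k < j → k ≠ i → G.Adj x (v k)) : False := by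
  have hjlt := j.isLt
  have hilt := i.isLt
  have hij' : (i : ℕ) < j := hij
  have hj' : p + 1 ≤ (j : ℕ) := by omega
  -- the p extra clique vertices
  have hbnd : ∀ t : Fin p, (if (t : ℕ) < (i : ℕ) then (t : ℕ) else (t : ℕ) + 1) < G.cliqueNum := by
    intro t; have := t.isLt; split <;> omega
  set g : Fin p → Fin G.cliqueNum := fun t =>
    ⟨if (t : ℕ) < (i : ℕ) then (t : ℕ) else (t : ℕ) + 1, hbnd t⟩ with hg
  have hglt : ∀ t, g t < j := by
    intro t; have := t.isLt; simp only [hg, Fin.lt_def]; split <;> omega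
  have hgne : ∀ t, g t ≠ i := by
    intro t h
    have : (g t : ℕ) = i := congrArg Fin.val h
    simp only [hg] at this; split at this <;> omega
  have hgnej : ∀ t, g t ≠ j := fun t => Fin.ne_of_lt (hglt t)
  have hginj : Function.Injective g := by
    intro t s h
    have : (g t : ℕ) = (g s : ℕ) := congrArg Fin.val h
    simp only [hg] at this
    apply Fin.ext
    split at this <;> split at this <;> omega
  have hxv : ∀ k : Fin G.cliqueNum, x ≠ v k := by
    intro k h; exact hxA ⟨k, h.symm⟩
  have hvv : ∀ k l : Fin G.cliqueNum, k ≠ l → G.Adj (v k) (v l) := by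
    intro k l h; exact hclique ⟨k, rfl⟩ ⟨l, rfl⟩ (fun e => h (hinj e))
  have hxg : ∀ t, G.Adj x (v (g t)) := fun t => hadj _ (hglt t) (hgne t)
  have hine : i ≠ j := Fin.ne_of_lt hij
  refine hfree ⟨⟨⟨Sum.elim (Sum.elim (fun _ => x) (fun a => if a = 0 then v i else v j))
      (fun t => v (g t)), ?_⟩, ?_⟩⟩
  · -- injectivity
    rintro ((a | a) | a) ((b | b) | b) h <;>
        simp only [Sum.elim_inl, Sum.elim_inr] at h
    · simp [Fin.fin_one_eq_zero a, Fin.fin_one_eq_zero b]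
    · exfalso; split at h <;> exact hxv _ h
    · exfalso; exact hxv _ h
    · exfalso; split at h <;> exact hxv _ h.symm
    · by_cases ha : a = 0 <;> by_cases hb : b = 0
      · rw [ha, hb]
      · rw [if_pos ha, if_neg hb] at h; exact absurd (hinj h) hine
      · rw [if_neg ha, if_pos hb] at h; exact absurd (hinj h).symm hine
      · rw [Fin.eq_one_of_ne_zero a ha, Fin.eq_one_of_ne_zero b hb]
    · exfalso; split at h
      · exact hgne b (hinj h).symm
      · exact hgnej b (hinj h).symm
    · exfalso; exact hxv _ h.symm
    · exfalso; split at h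
      · exact hgne a (hinj h)
      · exact hgnej a (hinj h)
    · rw [hginj (hinj h)]
  · -- map_rel_iff
    rintro ((a | a) | a) ((b | b) | b) <;>
      simp only [DFunLike.coe, Sum.elim_inl, Sum.elim_inr, K1K2Kp, joinG, K1K2, fromRel_adj,
        SimpleGraph.sum_adj, bot_adj, top_adj, ne_eq, Sum.inl.injEq, Sum.inr.injEq]
    · simp [Fin.fin_one_eq_zero a, Fin.fin_one_eq_zero b]
    · have hix : ¬ G.Adj (v i) x := fun h => hxi h.symm
      have hjx : ¬ G.Adj (v j) x := fun h => hxj h.symm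
      fin_cases b <;> simp [hxi, hxj]
    · simp [hxg b, Sum.inl_ne_inr]
    · have hix : ¬ G.Adj (v i) x := fun h => hxi h.symm
      have hjx : ¬ G.Adj (v j) x := fun h => hxj h.symm
      fin_cases a <;> simp [hix, hjx]
    · fin_cases a <;> fin_cases b <;>
        simp [hvv i j hine, hvv j i hine.symm, G.loopless]
    · fin_cases a <;>
        simp [hvv i (g b) (Ne.symm (hgne b)), hvv j (g b) (Ne.symm (hgnej b)), Sum.inl_ne_inr]
    · simp [(hxg a).symm, Sum.inr_ne_inl]
    · fin_cases b <;>
        simp [hvv (g a) i (hgne a), hvv (g a) j (hgnej a), Sum.inr_ne_inl]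
    · constructor
      · intro h
        have hne : g a ≠ g b := fun e => G.ne_of_adj h (congrArg v e)
        exact ⟨fun e => hne (congrArg g e), Or.inl (fun e => hne (congrArg g e))⟩
      · rintro ⟨h, _⟩
        exact hvv _ _ (fun e => h (hginj e))
end

section
/- Let G be a ((K1 ∪ K2) + Kp)-free graph with ω(G) ≥ p+2, p ≥ 1, with maximum clique A = {v1,...,vω} and sets U_k = {v_k} ∪ I_k where I_k is the set of vertices outside A adjacent to all of A except v_k. If x is a vertex belonging to some C_{i,j} (i.e., x is outside A and outside all I_k), then x has neighbors in at most p−1 of the sets U_1,...,U_ω. -/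
open SimpleGraph

lemma embed_aux {V : Type*} (G : SimpleGraph V) (p : ℕ) (a b c : V) (g : Fin p → V)
    (hab : a ≠ b) (hac : a ≠ c) (hnab : ¬ G.Adj a b) (hnac : ¬ G.Adj a c)
    (hbc : G.Adj b c)
    (hag : ∀ t, G.Adj a (g t)) (hbg : ∀ t, G.Adj b (g t)) (hcg : ∀ t, G.Adj c (g t))
    (hgg : ∀ s t, s ≠ t → G.Adj (g s) (g t)) :
    Nonempty (K1K2Kp p ↪g G) := by
  classical
  set f : (Fin 1 ⊕ Fin 2) ⊕ Fin p → V :=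
    Sum.elim (Sum.elim (fun _ => a) (fun i => if i = 0 then b else c)) g with hf
  have hadj : ∀ X Y, (K1K2Kp p).Adj X Y ↔ G.Adj (f X) (f Y) := by
    rintro ((x|x)|t) ((y|y)|s)
    · simp [K1K2Kp, joinG, K1K2, fromRel_adj, hf]
    · fin_cases x <;> fin_cases y <;>
        simp [K1K2Kp, joinG, K1K2, fromRel_adj, hf, hnab, hnac, hab, hac]
    · simp [K1K2Kp, joinG, K1K2, fromRel_adj, hf, hag s, (hag s).ne]
    · have h1 : ¬ G.Adj b a := fun h => hnab h.symm
      have h2 : ¬ G.Adj c a := fun h => hnac h.symm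
      fin_cases x <;>
        simp [K1K2Kp, joinG, K1K2, fromRel_adj, hf, hnab, hnac, hab.symm, hac.symm, h1, h2]
    · fin_cases x <;> fin_cases y <;>
        simp [K1K2Kp, joinG, K1K2, fromRel_adj, hf, hbc, hbc.symm, hbc.ne, hbc.ne']
    · fin_cases x <;>
        simp [K1K2Kp, joinG, K1K2, fromRel_adj, hf, hbg s, hcg s, (hbg s).ne, (hcg s).ne]
    · simp [K1K2Kp, joinG, K1K2, fromRel_adj, hf, (hag t).symm, (hag t).symm.ne]
    · fin_cases y <;>
        simp [K1K2Kp, joinG, K1K2, fromRel_adj, hf, (hbg t).symm, (hcg t).symm,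
          (hbg t).ne.symm, (hcg t).ne.symm]
    · constructor
      · intro h
        have hts : t ≠ s := by
          rintro rfl
          simp [K1K2Kp, joinG, K1K2, fromRel_adj] at h
        exact hgg t s hts
      · intro h
        have hts : t ≠ s := by rintro rfl; exact G.loopless.irrefl _ h
        simp [K1K2Kp, joinG, K1K2, fromRel_adj, hf, hts]
  refine ⟨⟨⟨f, ?_⟩, fun {X Y} => (hadj X Y).symm⟩⟩
  rintro ((x|x)|t) ((y|y)|s) hXY <;> simp only [hf, Sum.elim_inl, Sum.elim_inr] at hXY
  · rw [Subsingleton.elim x y]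
  · fin_cases y <;> simp_all
  · exact absurd hXY (hag s).ne
  · fin_cases x <;> simp_all
  · fin_cases x <;> fin_cases y <;> simp_all [hbc.ne]
  · fin_cases x <;> [exact absurd hXY (hbg s).ne; exact absurd hXY (hcg s).ne]
  · exact absurd hXY.symm (hag t).ne
  · fin_cases y <;> [exact absurd hXY.symm (hbg t).ne; exact absurd hXY.symm (hcg t).ne]
  · by_contra hne
    exact (hgg t s (by simpa using hne)).ne hXY

theorem stmt_3 {V : Type*} [Fintype V] (G : SimpleGraph V) (p : ℕ) (hp : 1 ≤ p)
    (hfree : _root_.Free (K1K2Kp p) G) (hω : p + 2 ≤ G.cliqueNum)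
    (v : Fin G.cliqueNum → V) (hinj : Function.Injective v)
    (hclique : G.IsClique (Set.range v))
    (x : V) (hxA : x ∉ Set.range v)
    (hxI : ∀ k : Fin G.cliqueNum, ¬ ∀ i, i ≠ k → G.Adj x (v i)) :
    {k : Fin G.cliqueNum |
      ∃ u ∈ insert (v k) {y | y ∉ Set.range v ∧ ∀ i, i ≠ k → G.Adj y (v i)},
        G.Adj x u}.ncard ≤ p - 1 := by
  classical
  by_contra hcon
  push_neg at hcon
  set S := {k : Fin G.cliqueNum |
      ∃ u ∈ insert (v k) {y | y ∉ Set.range v ∧ ∀ i, i ≠ k → G.Adj y (v i)},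
        G.Adj x u} with hS
  -- no vertex outside A is adjacent to all of A
  have hmaxcl : ∀ w : V, w ∉ Set.range v → ¬ (∀ i, G.Adj w (v i)) := by
    intro w hw hadj
    have himg : w ∉ Finset.univ.image v := by
      simp only [Finset.mem_image, Finset.mem_univ, true_and]
      rintro ⟨i, rfl⟩; exact hw (Set.mem_range_self i)
    have hcl : G.IsClique ↑(insert w (Finset.univ.image v)) := by
      rw [Finset.coe_insert, Finset.coe_image, Finset.coe_univ, Set.image_univ]
      intro a ha b hb hne
      rcases ha with rfl | ⟨i, rfl⟩
      · rcases hb with rfl | ⟨j, rfl⟩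
        · exact absurd rfl hne
        · exact hadj j
      · rcases hb with rfl | ⟨j, rfl⟩
        · exact (hadj i).symm
        · exact hclique ⟨i, rfl⟩ ⟨j, rfl⟩ hne
    have hcard : (insert w (Finset.univ.image v)).card = G.cliqueNum + 1 := by
      rw [Finset.card_insert_of_notMem himg, Finset.card_image_of_injective _ hinj,
        Finset.card_univ, Fintype.card_fin]
    have hle := SimpleGraph.IsClique.card_le_cliqueNum (tc := hcl)
    omega
  have hInadj : ∀ (k : Fin G.cliqueNum) (w : V), w ∉ Set.range v →
      (∀ i, i ≠ k → G.Adj w (v i)) → ¬ G.Adj w (v k) := by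
    intro k w hw hI hadj
    exact hmaxcl w hw (fun i => by
      by_cases hik : i = k
      · exact hik ▸ hadj
      · exact hI i hik)
  have hIdisj : ∀ (k l : Fin G.cliqueNum) (w : V), k ≠ l → w ∉ Set.range v →
      (∀ i, i ≠ k → G.Adj w (v i)) → (∀ i, i ≠ l → G.Adj w (v i)) → False := by
    intro k l w hkl hw hIk hIl
    exact hmaxcl w hw (fun i => by
      by_cases hik : i = k
      · exact hIl i (hik ▸ hkl)
      · exact hIk i hik)
  have hex : ∀ k ∈ S, ∃ u : V,
      (u = v k ∨ (u ∉ Set.range v ∧ ∀ i, i ≠ k → G.Adj u (v i))) ∧ G.Adj x u := by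
    intro k hk
    obtain ⟨u, hu, hadj⟩ := hk
    rcases Set.mem_insert_iff.mp hu with rfl | hu2
    · exact ⟨v k, Or.inl rfl, hadj⟩
    · exact ⟨u, Or.inr hu2, hadj⟩
  choose u hu1 hu2 using hex
  have P : ∀ k (hk : k ∈ S) (m : Fin G.cliqueNum), m ≠ k → G.Adj (u k hk) (v m) := by
    intro k hk m hmk
    rcases hu1 k hk with h | ⟨hw, hI⟩
    · rw [h]; exact hclique ⟨k, rfl⟩ ⟨m, rfl⟩ (fun he => hmk (hinj he).symm)
    · exact hI m hmk
  have Q : ∀ k (hk : k ∈ S) l (hl : l ∈ S), k ≠ l → G.Adj (u k hk) (u l hl) := by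
    intro k hk l hl hkl
    rcases hu1 l hl with h | ⟨hwl, hIl⟩
    · rw [h]; exact P k hk l (Ne.symm hkl)
    · rcases hu1 k hk with h' | ⟨hwk, hIk⟩
      · rw [h']; exact (hIl k hkl).symm
      · by_contra hnadj
        have hne : u k hk ≠ u l hl := by
          intro he
          exact hIdisj k l (u k hk) hkl hwk hIk (fun i hil => by rw [he]; exact hIl i hil)
        have hTcard : p ≤ (Finset.univ \ {k, l} : Finset (Fin G.cliqueNum)).card := by
          have h2 : ({k, l} : Finset (Fin G.cliqueNum)).card ≤ 2 :=
            (Finset.card_insert_le _ _).trans (by simp)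
          rw [Finset.card_sdiff_of_subset (Finset.subset_univ _), Finset.card_univ, Fintype.card_fin]
          omega
        obtain ⟨T, hTsub, hTcard'⟩ := Finset.exists_subset_card_eq hTcard
        set m : Fin p → Fin G.cliqueNum :=
          fun t => (T.orderIsoOfFin hTcard' t : Fin G.cliqueNum) with hm
        have hminj : Function.Injective m := fun s t hst =>
          (T.orderIsoOfFin hTcard').injective (Subtype.coe_injective hst)
        have hmmem : ∀ t, m t ∈ T := fun t => (T.orderIsoOfFin hTcard' t).2
        have hmkl : ∀ t, m t ≠ k ∧ m t ≠ l := by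
          intro t
          have := hTsub (hmmem t)
          simp only [Finset.mem_sdiff, Finset.mem_insert, Finset.mem_singleton] at this
          exact ⟨fun he => this.2 (Or.inl he), fun he => this.2 (Or.inr he)⟩
        exact hfree (embed_aux G p (u k hk) (u l hl) (v k) (fun t => v (m t))
          hne (fun he => hwk ⟨k, he.symm⟩) hnadj (hInadj k _ hwk hIk) (hIl k hkl)
          (fun t => hIk (m t) (hmkl t).1) (fun t => hIl (m t) (hmkl t).2)
          (fun t => hclique ⟨k, rfl⟩ ⟨m t, rfl⟩ (fun he => (hmkl t).1 (hinj he).symm))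
          (fun s t hst => hclique ⟨m s, rfl⟩ ⟨m t, rfl⟩
            (fun he => hst (hminj (hinj he)))))
  have hxI' : ∀ k, ∃ i, i ≠ k ∧ ¬ G.Adj x (v i) := by
    intro k; have h := hxI k; push_neg at h; exact h
  obtain ⟨m₁, _, hm₁⟩ := hxI' ⟨0, by omega⟩
  obtain ⟨m₂, hm₂₁, hm₂⟩ := hxI' m₁
  set Sf := (Set.toFinite S).toFinset with hSf
  have hmemSf : ∀ k, k ∈ Sf ↔ k ∈ S := fun k => Set.Finite.mem_toFinset _
  have hcardS : S.ncard = Sf.card := Set.ncard_eq_toFinset_card _ _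
  have hpS : p ≤ Sf.card := by omega
  set M := Finset.univ.filter (fun k => ¬ G.Adj x (v k)) with hM
  have hMmem : ∀ k, k ∈ M ↔ ¬ G.Adj x (v k) := by
    intro k; simp [hM]
  have hcompl : ∀ k, G.Adj x (v k) → k ∈ Sf := by
    intro k h
    rw [hmemSf]
    exact ⟨v k, Set.mem_insert _ _, h⟩
  by_cases hMS : 2 ≤ (M \ Sf).card
  · obtain ⟨i, hi, j, hj, hij⟩ := Finset.one_lt_card.mp (show 1 < (M \ Sf).card by omega)
    have hiM : ¬ G.Adj x (v i) := (hMmem i).mp (Finset.mem_sdiff.mp hi).1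
    have hjM : ¬ G.Adj x (v j) := (hMmem j).mp (Finset.mem_sdiff.mp hj).1
    have hiS : i ∉ Sf := (Finset.mem_sdiff.mp hi).2
    have hjS : j ∉ Sf := (Finset.mem_sdiff.mp hj).2
    obtain ⟨T, hTsub, hTcard'⟩ := Finset.exists_subset_card_eq hpS
    set m : Fin p → Fin G.cliqueNum :=
      fun t => (T.orderIsoOfFin hTcard' t : Fin G.cliqueNum) with hm
    have hminj : Function.Injective m := fun s t hst =>
      (T.orderIsoOfFin hTcard').injective (Subtype.coe_injective hst)
    have hmSf : ∀ t, m t ∈ Sf := fun t => hTsub (T.orderIsoOfFin hTcard' t).2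
    have hmS : ∀ t, m t ∈ S := fun t => (hmemSf _).mp (hmSf t)
    have hmi : ∀ t, i ≠ m t := fun t he => hiS (he ▸ hmSf t)
    have hmj : ∀ t, j ≠ m t := fun t he => hjS (he ▸ hmSf t)
    exact hfree (embed_aux G p x (v i) (v j) (fun t => u (m t) (hmS t))
      (fun he => hxA ⟨i, he.symm⟩) (fun he => hxA ⟨j, he.symm⟩) hiM hjM
      (hclique ⟨i, rfl⟩ ⟨j, rfl⟩ (fun he => hij (hinj he)))
      (fun t => hu2 (m t) (hmS t))
      (fun t => (P (m t) (hmS t) i (hmi t)).symm)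
      (fun t => (P (m t) (hmS t) j (hmj t)).symm)
      (fun s t hst => Q (m s) (hmS s) (m t) (hmS t) (fun he => hst (hminj he))))
  · have hMcard : 2 ≤ M.card := Finset.one_lt_card.mpr
      ⟨m₂, (hMmem m₂).mpr hm₂, m₁, (hMmem m₁).mpr hm₁, hm₂₁⟩
    have hSbig : G.cliqueNum ≤ Sf.card + (M \ Sf).card := by
      have huniv : (Finset.univ : Finset (Fin G.cliqueNum)) ⊆ Sf ∪ (M \ Sf) := by
        intro k _
        by_cases h : G.Adj x (v k)
        · exact Finset.mem_union_left _ (hcompl k h)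
        · by_cases h2 : k ∈ Sf
          · exact Finset.mem_union_left _ h2
          · exact Finset.mem_union_right _ (Finset.mem_sdiff.mpr ⟨(hMmem k).mpr h, h2⟩)
      calc G.cliqueNum = (Finset.univ : Finset (Fin G.cliqueNum)).card := by
            rw [Finset.card_univ, Fintype.card_fin]
        _ ≤ (Sf ∪ (M \ Sf)).card := Finset.card_le_card huniv
        _ ≤ Sf.card + (M \ Sf).card := Finset.card_union_le _ _
    have hMSle : (M \ Sf).card ≤ 1 := by omega
    have hSp1 : p + 1 ≤ Sf.card := by omega
    have hMScard : 0 < (M ∩ Sf).card := by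
      have hle := Finset.card_union_le (M \ Sf) (M ∩ Sf)
      rw [Finset.sdiff_union_inter M Sf] at hle
      omega
    obtain ⟨k, hkMS⟩ := Finset.card_pos.mp hMScard
    have hkM : ¬ G.Adj x (v k) := (hMmem k).mp (Finset.mem_inter.mp hkMS).1
    have hkSf : k ∈ Sf := (Finset.mem_inter.mp hkMS).2
    have hkS : k ∈ S := (hmemSf k).mp hkSf
    have hukI : u k hkS ∉ Set.range v ∧ ∀ i, i ≠ k → G.Adj (u k hkS) (v i) := by
      rcases hu1 k hkS with h | h
      · exact absurd (h ▸ hu2 k hkS) hkM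
      · exact h
    have hTcard : p ≤ (Sf \ {k}).card := by
      rw [Finset.card_sdiff_of_subset (Finset.singleton_subset_iff.mpr hkSf), Finset.card_singleton]
      omega
    obtain ⟨T, hTsub, hTcard'⟩ := Finset.exists_subset_card_eq hTcard
    set m : Fin p → Fin G.cliqueNum :=
      fun t => (T.orderIsoOfFin hTcard' t : Fin G.cliqueNum) with hm
    have hminj : Function.Injective m := fun s t hst =>
      (T.orderIsoOfFin hTcard').injective (Subtype.coe_injective hst)
    have hmmem : ∀ t, m t ∈ Sf \ {k} := fun t => hTsub (T.orderIsoOfFin hTcard' t).2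
    have hmS : ∀ t, m t ∈ S := fun t => (hmemSf _).mp (Finset.mem_sdiff.mp (hmmem t)).1
    have hmk : ∀ t, m t ≠ k := fun t => by
      have := (Finset.mem_sdiff.mp (hmmem t)).2
      simpa using this
    exact hfree (embed_aux G p (v k) x (u k hkS) (fun t => u (m t) (hmS t))
      (fun he => hxA ⟨k, he⟩) (fun he => hukI.1 ⟨k, he⟩)
      (fun h => hkM h.symm) (fun h => hInadj k _ hukI.1 hukI.2 h.symm)
      (hu2 k hkS)
      (fun t => (P (m t) (hmS t) k (Ne.symm (hmk t))).symm)
      (fun t => hu2 (m t) (hmS t))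
      (fun t => Q k hkS (m t) (hmS t) (Ne.symm (hmk t)))
      (fun s t hst => Q (m s) (hmS s) (m t) (hmS t) (fun he => hst (hminj he))))
end

section
/- Let G be a connected graph. Then G is paw-free if and only if G is triangle-free or complete multipartite. -/
open SimpleGraph

/-- `G` is complete multipartite: its vertex set can be partitioned into (independent) parts
such that two vertices are adjacent iff they lie in different parts. -/
def IsCompleteMultipartite {V : Type*} (G : SimpleGraph V) : Prop :=
  ∃ r : Setoid V, ∀ x y, G.Adj x y ↔ ¬ r x y

lemma exists_paw_emb {V : Type*} (G : SimpleGraph V) (a b c d : V)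
    (hbc : G.Adj b c) (hda : G.Adj d a) (hdb : G.Adj d b) (hdc : G.Adj d c)
    (hab : ¬ G.Adj a b) (hac : ¬ G.Adj a c) : Nonempty (paw ↪g G) := by
  have hcb := hbc.symm
  have had := hda.symm
  have hbd := hdb.symm
  have hcd := hdc.symm
  have hba : ¬ G.Adj b a := fun h => hab h.symm
  have hca : ¬ G.Adj c a := fun h => hac h.symm
  have hab' : a ≠ b := fun h => hac (h ▸ hbc)
  have hac' : a ≠ c := fun h => hab (h ▸ hcb)
  have had' : a ≠ d := fun h => G.irrefl (h ▸ hda)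
  have hbc' : b ≠ c := hbc.ne
  have hbd' : b ≠ d := fun h => G.irrefl (h ▸ hdb)
  have hcd' : c ≠ d := fun h => G.irrefl (h ▸ hdc)
  refine ⟨⟨⟨Sum.elim (Sum.elim (fun _ => a) (fun i => if i = 0 then b else c)) (fun _ => d), ?_⟩, ?_⟩⟩
  · rintro ((⟨i,hi⟩|⟨i,hi⟩)|⟨i,hi⟩) ((⟨j,hj⟩|⟨j,hj⟩)|⟨j,hj⟩) h <;>
      interval_cases i <;> interval_cases j <;>
      simp_all
  · rintro ((⟨i,hi⟩|⟨i,hi⟩)|⟨i,hi⟩) ((⟨j,hj⟩|⟨j,hj⟩)|⟨j,hj⟩) <;>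
      interval_cases i <;> interval_cases j <;>
      simp_all [paw, K1K2Kp, joinG, K1K2] <;> assumption

lemma paw_emb_config {V : Type*} (G : SimpleGraph V) (f : paw ↪g G) :
    ∃ a b c d : V, G.Adj b c ∧ G.Adj d a ∧ G.Adj d b ∧ G.Adj d c ∧
      ¬ G.Adj a b ∧ ¬ G.Adj a c := by
  refine ⟨f (Sum.inl (Sum.inl 0)), f (Sum.inl (Sum.inr 0)), f (Sum.inl (Sum.inr 1)),
    f (Sum.inr 0), ?_, ?_, ?_, ?_, ?_, ?_⟩ <;>
    rw [f.map_adj_iff] <;> simp [paw, K1K2Kp, joinG, K1K2]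

theorem stmt_4 {V : Type*} [Fintype V] (G : SimpleGraph V) (hconn : G.Connected) :
    _root_.Free paw G ↔ (G.CliqueFree 3 ∨ _root_.IsCompleteMultipartite G) := by
  classical
  constructor
  · intro hfree
    have hf : ∀ a b c d : V, G.Adj b c → G.Adj d a → G.Adj d b → G.Adj d c →
        G.Adj a b ∨ G.Adj a c := by
      intro a b c d hbc hda hdb hdc
      by_contra h
      push_neg at h
      exact hfree (exists_paw_emb G a b c d hbc hda hdb hdc h.1 h.2)
    by_cases hCF : G.CliqueFree 3
    · exact Or.inl hCF
    right
    -- key : with respect to any triangle, every vertex is adjacent to at least two of its vertices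
    have key : ∀ x y z : V, G.Adj x y → G.Adj y z → G.Adj x z → ∀ v,
        (G.Adj v x ∧ G.Adj v y) ∨ (G.Adj v y ∧ G.Adj v z) ∨ (G.Adj v x ∧ G.Adj v z) := by
      intro x y z hxy hyz hxz
      set P : V → Prop := fun v =>
        (G.Adj v x ∧ G.Adj v y) ∨ (G.Adj v y ∧ G.Adj v z) ∨ (G.Adj v x ∧ G.Adj v z) with hP
      -- adjacency to one triangle vertex gives adjacency to two
      have step1 : ∀ w : V, G.Adj w x ∨ G.Adj w y ∨ G.Adj w z → P w := by
        intro w hw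
        rcases hw with h | h | h
        · rcases hf w y z x hyz h.symm hxy hxz with h' | h'
          · exact Or.inl ⟨h, h'⟩
          · exact Or.inr (Or.inr ⟨h, h'⟩)
        · rcases hf w x z y hxz h.symm hxy.symm hyz with h' | h'
          · exact Or.inl ⟨h', h⟩
          · exact Or.inr (Or.inl ⟨h, h'⟩)
        · rcases hf w x y z hxy h.symm hxz.symm hyz.symm with h' | h'
          · exact Or.inr (Or.inr ⟨h', h⟩)
          · exact Or.inr (Or.inl ⟨h', h⟩)
      -- P is closed under adjacency
      have step2 : ∀ u w : V, P u → G.Adj u w → P w := by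
        intro u w hu huw
        rcases hu with ⟨h1, h2⟩ | ⟨h1, h2⟩ | ⟨h1, h2⟩
        · rcases hf w x y u hxy huw h1 h2 with h | h
          · exact step1 w (Or.inl h)
          · exact step1 w (Or.inr (Or.inl h))
        · rcases hf w y z u hyz huw h1 h2 with h | h
          · exact step1 w (Or.inr (Or.inl h))
          · exact step1 w (Or.inr (Or.inr h))
        · rcases hf w x z u hxz huw h1 h2 with h | h
          · exact step1 w (Or.inl h)
          · exact step1 w (Or.inr (Or.inr h))
      have walkP : ∀ (u w : V) (p : G.Walk u w), P u → P w := by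
        intro u w p
        induction p with
        | nil => exact id
        | cons h q ih => exact fun hu => ih (step2 _ _ hu h)
      intro v
      obtain ⟨p⟩ := hconn x v
      exact walkP x v p (Or.inr (Or.inl ⟨hxy, hxz⟩))
    -- extract a triangle
    rw [CliqueFree] at hCF
    push_neg at hCF
    obtain ⟨s, hs⟩ := hCF
    rw [is3Clique_iff] at hs
    obtain ⟨x, y, z, hxy, hxz, hyz, -⟩ := hs
    -- every edge lies in a triangle
    have edge_tri : ∀ u v : V, G.Adj u v → ∃ w, G.Adj u w ∧ G.Adj v w := by
      intro u v huv
      have hu := key x y z hxy hyz hxz u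
      have hv := key x y z hxy hyz hxz v
      rcases hu with ⟨h, h'⟩ | ⟨h, h'⟩ | ⟨h, h'⟩ <;>
        rcases hv with ⟨g, g'⟩ | ⟨g, g'⟩ | ⟨g, g'⟩ <;>
        first
          | exact ⟨x, h, g⟩ | exact ⟨x, h, g'⟩ | exact ⟨x, h', g⟩ | exact ⟨x, h', g'⟩
          | exact ⟨y, h, g⟩ | exact ⟨y, h, g'⟩ | exact ⟨y, h', g⟩ | exact ⟨y, h', g'⟩
          | exact ⟨z, h, g⟩ | exact ⟨z, h, g'⟩ | exact ⟨z, h', g⟩ | exact ⟨z, h', g'⟩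
    -- non-adjacency is transitive
    have trans : ∀ a b c : V, ¬ G.Adj a b → ¬ G.Adj b c → ¬ G.Adj a c := by
      intro a b c hab hbc hac
      obtain ⟨w, haw, hcw⟩ := edge_tri a c hac
      rcases key a c w hac hcw haw b with ⟨h, -⟩ | ⟨h, -⟩ | ⟨h, -⟩
      · exact hab h.symm
      · exact hbc h
      · exact hab h.symm
    refine ⟨⟨fun u v => ¬ G.Adj u v, fun u => G.irrefl, fun h g => h g.symm,
      fun {a b c} h g => trans a b c h g⟩, fun u v => (not_not.symm)⟩
  · rintro (hCF | ⟨r, hr⟩) ⟨f⟩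
    · obtain ⟨a, b, c, d, hbc, hda, hdb, hdc, hab, hac⟩ := paw_emb_config G f
      exact hCF {d, b, c} (is3Clique_triple_iff.2 ⟨hdb, hdc, hbc⟩)
    · obtain ⟨a, b, c, d, hbc, hda, hdb, hdc, hab, hac⟩ := paw_emb_config G f
      have rab : r a b := not_not.1 (fun h => hab ((hr a b).2 h))
      have rac : r a c := not_not.1 (fun h => hac ((hr a c).2 h))
      exact (hr b c).1 hbc (r.iseqv.trans (r.iseqv.symm rab) rac)
end

section
/- Let p ≥ 1 and let G be a {P3 ∪ P2, (K1 ∪ K2) + Kp}-free graph with ω(G) ≥ max{3, 3p−1}. With the partition V(G) = V1 ∪ V2 where V1 = A ∪ ⋃_k I_k and V2 = ⋃ C_{i,j}, the induced subgraph on V2 is P3-free. -/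
open SimpleGraph

lemma buildP3P2 {V : Type*} {G : SimpleGraph V} {x y z a b : V}
    (hxy : G.Adj x y) (hyz : G.Adj y z) (hxz : ¬ G.Adj x z)
    (hab : G.Adj a b)
    (hxa : ¬ G.Adj x a) (hxb : ¬ G.Adj x b)
    (hya : ¬ G.Adj y a) (hyb : ¬ G.Adj y b)
    (hza : ¬ G.Adj z a) (hzb : ¬ G.Adj z b)
    (nxz : x ≠ z) (nxa : x ≠ a) (nxb : x ≠ b) (nya : y ≠ a) (nyb : y ≠ b)
    (nza : z ≠ a) (nzb : z ≠ b) :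
    Nonempty (P3P2 ↪g G) := by
  have nxy := hxy.ne
  have nyz := hyz.ne
  have nab := hab.ne
  have hxy' := hxy.symm
  have hyz' := hyz.symm
  have hab' := hab.symm
  have hxz' : ¬ G.Adj z x := fun h => hxz h.symm
  have hxa' : ¬ G.Adj a x := fun h => hxa h.symm
  have hxb' : ¬ G.Adj b x := fun h => hxb h.symm
  have hya' : ¬ G.Adj a y := fun h => hya h.symm
  have hyb' : ¬ G.Adj b y := fun h => hyb h.symm
  have hza' : ¬ G.Adj a z := fun h => hza h.symm
  have hzb' : ¬ G.Adj b z := fun h => hzb h.symm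
  refine ⟨⟨⟨Sum.elim ![x, y, z] ![a, b], ?_⟩, ?_⟩⟩
  · intro w w' h
    rcases w with i | j <;> rcases w' with i' | j' <;>
      [fin_cases i <;> fin_cases i'; fin_cases i <;> fin_cases j';
       fin_cases j <;> fin_cases i'; fin_cases j <;> fin_cases j'] <;>
      simp_all
  · intro w w'
    change G.Adj (Sum.elim ![x, y, z] ![a, b] w) (Sum.elim ![x, y, z] ![a, b] w') ↔ _
    rcases w with i | j <;> rcases w' with i' | j' <;>
      [fin_cases i <;> fin_cases i'; fin_cases i <;> fin_cases j';
       fin_cases j <;> fin_cases i'; fin_cases j <;> fin_cases j'] <;>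
      simp_all [P3P2, pathGraph_adj]

lemma buildK1K2Kp {V : Type*} {G : SimpleGraph V} {p : ℕ} (u : V) (c : Fin 2 → V) (s : Fin p → V)
    (hcs : ∀ j i, c j ≠ s i) (hus : ∀ i, u ≠ s i) (huc : ∀ j, u ≠ c j)
    (hsinj : Function.Injective s) (hcne : c 0 ≠ c 1)
    (hucadj : ∀ j, ¬ G.Adj u (c j)) (hcadj : G.Adj (c 0) (c 1))
    (husadj : ∀ i, G.Adj u (s i)) (hcsadj : ∀ j i, G.Adj (c j) (s i))
    (hsadj : ∀ i i', i ≠ i' → G.Adj (s i) (s i')) :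
    Nonempty (K1K2Kp p ↪g G) := by
  refine ⟨⟨⟨fun w => match w with
    | Sum.inl (Sum.inl _) => u
    | Sum.inl (Sum.inr j) => c j
    | Sum.inr i => s i, ?_⟩, ?_⟩⟩
  · intro w w' h
    rcases w with (k | j) | i <;> rcases w' with (k' | j') | i' <;>
      simp only [Sum.inl.injEq, Sum.inr.injEq, reduceCtorEq, Fin.fin_one_eq_zero] at h ⊢ <;> first
      | (exact absurd h (hcs _ _)) | (exact absurd h.symm (hcs _ _))
      | (exact absurd h (hus _)) | (exact absurd h.symm (hus _))
      | (exact absurd h (huc _)) | (exact absurd h.symm (huc _))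
      | (exact hsinj h)
      | (fin_cases j <;> fin_cases j' <;> simp_all)
  · intro w w'
    dsimp only [DFunLike.coe]
    rcases w with (k | j) | i <;> rcases w' with (k' | j') | i' <;>
      simp_all [K1K2Kp, joinG, K1K2, fromRel_adj, Fin.fin_one_eq_zero, -Fin.forall_fin_two] <;> first
      | (exact fun h => hucadj _ h.symm)
      | (exact (husadj _).symm)
      | (exact (hcsadj _ _).symm)
      | (fin_cases j <;> fin_cases j' <;>
          simp_all [hcadj.symm, Fin.ext_iff])
      | (exact ⟨fun (h : G.Adj _ _) => ⟨fun e => h.ne (by rw [e]), Or.inl fun e => h.ne (by rw [e])⟩,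
          fun h => hsadj _ _ h.1⟩)

lemma degree_bound {V : Type*} {G : SimpleGraph V} {p n : ℕ}
    (hf2 : _root_.Free (K1K2Kp p) G) (hn : 0 < n) {v : Fin n → V}
    (hinj : Function.Injective v) (hclique : G.IsClique (Set.range v))
    {u : V} (hu1 : u ∉ Set.range v)
    (hu2 : ∀ k : Fin n, ¬ ∀ i, i ≠ k → G.Adj u (v i))
    (N : Finset (Fin n)) (hN : ∀ i ∈ N, G.Adj u (v i)) : N.card < p := by
  by_contra hcard
  push_neg at hcard
  have hadj : ∀ i j : Fin n, i ≠ j → G.Adj (v i) (v j) :=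
    fun i j hij => hclique ⟨i, rfl⟩ ⟨j, rfl⟩ (fun h => hij (hinj h))
  obtain ⟨a, -, ha⟩ : ∃ i, i ≠ (⟨0, hn⟩ : Fin n) ∧ ¬ G.Adj u (v i) := by
    have := hu2 ⟨0, hn⟩; push_neg at this; exact this
  obtain ⟨b, hba, hb⟩ : ∃ i, i ≠ a ∧ ¬ G.Adj u (v i) := by
    have := hu2 a; push_neg at this; exact this
  obtain ⟨t, htN, htc⟩ := Finset.exists_subset_card_eq hcard
  set s : Fin p → Fin n := fun i => (t.orderIsoOfFin htc i : Fin n) with hs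
  have hsmem : ∀ i, s i ∈ N := fun i => htN (t.orderIsoOfFin htc i).2
  have hsinj : Function.Injective s :=
    fun i i' h => (t.orderIsoOfFin htc).injective (Subtype.ext h)
  have haN : a ∉ N := fun h => ha (hN a h)
  have hbN : b ∉ N := fun h => hb (hN b h)
  set c : Fin 2 → Fin n := ![a, b] with hc
  have hcmem : ∀ j, c j ∉ N := by intro j; fin_cases j <;> assumption
  have hcmiss : ∀ j, ¬ G.Adj u (v (c j)) := by intro j; fin_cases j <;> assumption
  refine hf2 ?_
  refine buildK1K2Kp u (fun j => v (c j)) (fun i => v (s i)) ?_ ?_ ?_ ?_ ?_ ?_ ?_ ?_ ?_ ?_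
  · exact fun j i h => hcmem j (by rw [hinj h]; exact hsmem i)
  · exact fun i h => hu1 ⟨s i, h.symm⟩
  · exact fun j h => hu1 ⟨c j, h.symm⟩
  · exact fun i i' h => hsinj (hinj h)
  · show v a ≠ v b
    exact fun h => hba ((hinj h).symm)
  · exact hcmiss
  · show G.Adj (v a) (v b)
    exact hadj a b (fun h => hba h.symm)
  · exact fun i => hN _ (hsmem i)
  · exact fun j i => hadj _ _ (fun h => hcmem j (by rw [h]; exact hsmem i))
  · exact fun i i' h => hadj _ _ (fun e => h (hsinj e))

theorem stmt_5 {V : Type*} [Fintype V] (G : SimpleGraph V) (p : ℕ) (hp : 1 ≤ p)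
    (hf1 : _root_.Free P3P2 G) (hf2 : _root_.Free (K1K2Kp p) G)
    (hω : max 3 (3 * p - 1) ≤ G.cliqueNum)
    (v : Fin G.cliqueNum → V) (hinj : Function.Injective v)
    (hclique : G.IsClique (Set.range v)) :
    _root_.Free (pathGraph 3)
      (G.induce {x | x ∉ Set.range v ∧
        ∀ k : Fin G.cliqueNum, ¬ ∀ i, i ≠ k → G.Adj x (v i)}) := by
  classical
  have hn3 : 3 ≤ G.cliqueNum := le_trans (le_max_left _ _) hω
  have hnp : 3 * p - 1 ≤ G.cliqueNum := le_trans (le_max_right _ _) hω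
  have hn : 0 < G.cliqueNum := by omega
  rintro ⟨e⟩
  have hadj_iff : ∀ i j : Fin 3, G.Adj (e i).1 (e j).1 ↔ (pathGraph 3).Adj i j := by
    intro i j
    exact Iff.trans Iff.rfl e.map_adj_iff
  set x : V := (e 0).1 with hxdef
  set y : V := (e 1).1 with hydef
  set z : V := (e 2).1 with hzdef
  have hxy : G.Adj x y := (hadj_iff 0 1).2 (by simp [pathGraph_adj])
  have hyz : G.Adj y z := (hadj_iff 1 2).2 (by simp [pathGraph_adj])
  have hxz : ¬ G.Adj x z := fun h => by
    have := (hadj_iff 0 2).1 h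
    simp [pathGraph_adj] at this
  have nxz : x ≠ z := fun h => by
    have : (0 : Fin 3) = 2 := e.injective (Subtype.ext h)
    simp at this
  obtain ⟨hx1, hx2⟩ := (e 0).2
  obtain ⟨hy1, hy2⟩ := (e 1).2
  obtain ⟨hz1, hz2⟩ := (e 2).2
  have key : ∀ u : V, u ∉ Set.range v → (∀ k : Fin G.cliqueNum, ¬ ∀ i, i ≠ k → G.Adj u (v i)) →
      (Finset.univ.filter fun i => G.Adj u (v i)).card < p := by
    intro u hu1 hu2
    exact degree_bound hf2 hn hinj hclique hu1 hu2 _ (by intro i hi; simpa using hi)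
  have hcx := key x hx1 hx2
  have hcy := key y hy1 hy2
  have hcz := key z hz1 hz2
  set Mx := Finset.univ.filter fun i => ¬ G.Adj x (v i) with hMx
  set My := Finset.univ.filter fun i => ¬ G.Adj y (v i) with hMy
  set Mz := Finset.univ.filter fun i => ¬ G.Adj z (v i) with hMz
  have hsplit : ∀ u : V, (Finset.univ.filter fun i => G.Adj u (v i)).card +
      (Finset.univ.filter fun i => ¬ G.Adj u (v i)).card = G.cliqueNum := by
    intro u
    rw [Finset.card_filter_add_card_filter_not]
    simp
  have hsx := hsplit x
  have hsy := hsplit y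
  have hsz := hsplit z
  rw [← hMx] at hsx
  rw [← hMy] at hsy
  rw [← hMz] at hsz
  have h1 : (Mx ∩ My).card + (Mx ∪ My).card = Mx.card + My.card :=
    Finset.card_inter_add_card_union _ _
  have h2 : ((Mx ∩ My) ∩ Mz).card + ((Mx ∩ My) ∪ Mz).card = (Mx ∩ My).card + Mz.card :=
    Finset.card_inter_add_card_union _ _
  have hb1 : (Mx ∪ My).card ≤ G.cliqueNum := le_trans (Finset.card_le_univ _) (by simp)
  have hb2 : ((Mx ∩ My) ∪ Mz).card ≤ G.cliqueNum := le_trans (Finset.card_le_univ _) (by simp)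
  have hT : 1 < ((Mx ∩ My) ∩ Mz).card := by omega
  obtain ⟨a, haT, b, hbT, hab⟩ := Finset.one_lt_card.1 hT
  simp only [Finset.mem_inter, hMx, hMy, hMz, Finset.mem_filter, Finset.mem_univ, true_and] at haT hbT
  obtain ⟨⟨hxa, hya⟩, hza⟩ := haT
  obtain ⟨⟨hxb, hyb⟩, hzb⟩ := hbT
  have hab' : G.Adj (v a) (v b) :=
    hclique ⟨a, rfl⟩ ⟨b, rfl⟩ (fun h => hab (hinj h))
  refine hf1 (buildP3P2 hxy hyz hxz hab' hxa hxb hya hyb hza hzb nxz ?_ ?_ ?_ ?_ ?_ ?_)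
  · exact fun h => hx1 ⟨a, h.symm⟩
  · exact fun h => hx1 ⟨b, h.symm⟩
  · exact fun h => hy1 ⟨a, h.symm⟩
  · exact fun h => hy1 ⟨b, h.symm⟩
  · exact fun h => hz1 ⟨a, h.symm⟩
  · exact fun h => hz1 ⟨b, h.symm⟩
end

section
/- Let p ≥ 1 and let G be a {P3 ∪ P2, (K1 ∪ K2) + Kp}-free graph with ω(G) ≥ max{3, 3p−1}. Then χ(G) ≤ ω(G) + p − 1. -/
open SimpleGraph

namespace StmtAux

attribute [local instance] Classical.propDecidable

open Finset

variable {V : Type*} {G : SimpleGraph V} {p : ℕ}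

section Cfg

lemma cfgP3P2 (hf : _root_.Free P3P2 G) (u v w s t : V)
    (huv : G.Adj u v) (hvw : G.Adj v w) (huw : ¬ G.Adj u w) (hst : G.Adj s t)
    (hUW : u ≠ w)
    (hus : ¬ G.Adj u s) (hut : ¬ G.Adj u t) (hvs : ¬ G.Adj v s) (hvt : ¬ G.Adj v t)
    (hws : ¬ G.Adj w s) (hwt : ¬ G.Adj w t)
    (dus : u ≠ s) (dut : u ≠ t) (dvs : v ≠ s) (dvt : v ≠ t) (dws : w ≠ s) (dwt : w ≠ t) :
    False := by
  apply hf
  let f : Fin 3 ⊕ Fin 2 → V := fun x => match x with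
    | Sum.inl 0 => u | Sum.inl 1 => v | Sum.inl 2 => w
    | Sum.inr 0 => s | Sum.inr 1 => t
  have huv' := huv.ne
  have hvw' := hvw.ne
  have hst' := hst.ne
  refine ⟨⟨⟨f, ?_⟩, ?_⟩⟩
  · rintro (a|a) (b|b) hab <;> fin_cases a <;> fin_cases b <;> simp_all [f]
  · rintro (a|a) (b|b) <;> change G.Adj (f _) (f _) ↔ _ <;> fin_cases a <;> fin_cases b <;>
      simp [P3P2, pathGraph_adj, f, huv, hvw, hst, huw, hus, hut, hvs, hvt, hws, hwt,
        huv.symm, hvw.symm, hst.symm, G.irrefl] <;>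
      first
        | exact fun h => huw (G.adj_symm h)
        | exact fun h => hus (G.adj_symm h)
        | exact fun h => hut (G.adj_symm h)
        | exact fun h => hvs (G.adj_symm h)
        | exact fun h => hvt (G.adj_symm h)
        | exact fun h => hws (G.adj_symm h)
        | exact fun h => hwt (G.adj_symm h)

lemma adjK1K2Kp_ll {p : ℕ} (u v : Fin 1 ⊕ Fin 2) :
    (K1K2Kp p).Adj (Sum.inl u) (Sum.inl v) ↔ K1K2.Adj u v := by
  simp only [K1K2Kp, joinG, fromRel_adj]
  constructor
  · rintro ⟨h1, h2|h2⟩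
    · exact h2
    · exact h2.symm
  · intro h; exact ⟨fun he => (Sum.inl_injective he ▸ h).ne rfl, Or.inl h⟩

lemma adjK1K2Kp_lr {p : ℕ} (u : Fin 1 ⊕ Fin 2) (j : Fin p) :
    (K1K2Kp p).Adj (Sum.inl u) (Sum.inr j) := by
  simp only [K1K2Kp, joinG, fromRel_adj]
  exact ⟨by simp, Or.inl trivial⟩

lemma adjK1K2Kp_rr {p : ℕ} (i j : Fin p) :
    (K1K2Kp p).Adj (Sum.inr i) (Sum.inr j) ↔ i ≠ j := by
  simp only [K1K2Kp, joinG, fromRel_adj, top_adj]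
  constructor
  · rintro ⟨h1, _⟩; exact fun he => h1 (congrArg _ he)
  · intro h; exact ⟨fun he => h (Sum.inr_injective he), Or.inl h⟩

lemma adjK1K2_iff (u v : Fin 1 ⊕ Fin 2) :
    K1K2.Adj u v ↔ (∃ i j : Fin 2, i ≠ j ∧ u = Sum.inr i ∧ v = Sum.inr j) := by
  rcases u with u|u <;> rcases v with v|v <;> simp [K1K2]

lemma cfgK1K2Kp (hf : _root_.Free (K1K2Kp p) G) (Q : Finset V) (x y z : V)
    (hQc : G.IsClique Q) (hQcard : Q.card = p)
    (hxQ : x ∉ Q) (hyQ : y ∉ Q) (hzQ : z ∉ Q)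
    (hyz : G.Adj y z) (hxy : ¬ G.Adj x y) (hxz : ¬ G.Adj x z)
    (dxy : x ≠ y) (dxz : x ≠ z)
    (hadj : ∀ q ∈ Q, G.Adj x q ∧ G.Adj y q ∧ G.Adj z q) : False := by
  apply hf
  have e := Q.equivFinOfCardEq hQcard
  set g : Fin p → V := fun i => ((e.symm i : ↥Q) : V) with hg
  have hmem : ∀ i : Fin p, g i ∈ Q := fun i => (e.symm i).2
  have hginj : Function.Injective g := by
    intro i j h
    simpa using congrArg e (Subtype.ext (p := fun v => v ∈ Q) h)
  let f : (Fin 1 ⊕ Fin 2) ⊕ Fin p → V := fun a => match a with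
    | Sum.inl (Sum.inl _) => x
    | Sum.inl (Sum.inr i) => if i = 0 then y else z
    | Sum.inr i => g i
  have hmem' : ∀ i : Fin p, f (Sum.inr i) ∈ Q := hmem
  have hfl : ∀ u : Fin 1 ⊕ Fin 2, f (Sum.inl u) = x ∨ f (Sum.inl u) = y ∨ f (Sum.inl u) = z := by
    rintro (u|u)
    · exact Or.inl rfl
    · by_cases h : u = 0 <;> simp [f, h]
  have hflQ : ∀ u : Fin 1 ⊕ Fin 2, f (Sum.inl u) ∉ Q := by
    intro u; rcases hfl u with h|h|h <;> rw [h] <;> assumption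
  have dyz : y ≠ z := hyz.ne
  have hinj : Function.Injective f := by
    rintro ((a|a)|i) ((b|b)|j) hab
    · rw [Fin.eq_zero a, Fin.eq_zero b]
    · exfalso; simp only [f] at hab
      split_ifs at hab <;> [exact dxy hab; exact dxz hab]
    · exfalso; exact hflQ (Sum.inl a) (hab ▸ hmem' j)
    · exfalso; simp only [f] at hab
      split_ifs at hab <;> [exact dxy hab.symm; exact dxz hab.symm]
    · simp only [f] at hab
      split_ifs at hab with h1 h2 h2
      · rw [show a = b by omega]
      · exact absurd hab dyz
      · exact absurd hab.symm dyz
      · rw [show a = b by omega]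
    · exfalso; exact hflQ (Sum.inr a) (hab ▸ hmem' j)
    · exfalso; exact hflQ (Sum.inl b) (hab.symm ▸ hmem' i)
    · exfalso; exact hflQ (Sum.inr b) (hab.symm ▸ hmem' i)
    · rw [hginj hab]
  have hadjl : ∀ (u : Fin 1 ⊕ Fin 2) (j : Fin p), G.Adj (f (Sum.inl u)) (f (Sum.inr j)) := by
    intro u j
    rcases hfl u with h|h|h <;> rw [h]
    · exact (hadj _ (hmem j)).1
    · exact (hadj _ (hmem j)).2.1
    · exact (hadj _ (hmem j)).2.2
  refine ⟨⟨⟨f, hinj⟩, ?_⟩⟩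
  rintro ((a|a)|i) ((b|b)|j) <;>
      simp only [Function.Embedding.coeFn_mk]
  · rw [adjK1K2Kp_ll, adjK1K2_iff]
    show G.Adj x x ↔ _
    simp
  · rw [adjK1K2Kp_ll, adjK1K2_iff]
    show G.Adj x (if b = 0 then y else z) ↔ _
    split_ifs <;> simp_all
  · rw [iff_true_intro (adjK1K2Kp_lr _ _), iff_true]
    exact hadjl (Sum.inl a) j
  · rw [adjK1K2Kp_ll, adjK1K2_iff]
    show G.Adj (if a = 0 then y else z) x ↔ _
    split_ifs <;>
      simp_all [fun h => hxy (G.adj_symm h), fun h => hxz (G.adj_symm h)]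
    · exact fun h => hxy (G.adj_symm h)
    · exact fun h => hxz (G.adj_symm h)
  · rw [adjK1K2Kp_ll, adjK1K2_iff]
    show G.Adj (if a = 0 then y else z) (if b = 0 then y else z) ↔ _
    split_ifs with h1 h2 h2
    · simp_all [G.irrefl]
    · simp only [iff_true_intro hyz, true_iff]
      exact ⟨a, b, by omega, rfl, rfl⟩
    · simp only [iff_true_intro hyz.symm, true_iff]
      exact ⟨a, b, by omega, rfl, rfl⟩
    · have : a = b := by omega
      subst this
      simp [G.irrefl]
  · rw [iff_true_intro (adjK1K2Kp_lr _ _), iff_true]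
    exact hadjl (Sum.inr a) j
  · rw [show ((K1K2Kp p).Adj (Sum.inr i) (Sum.inl (Sum.inl b))) ↔ True from
      ⟨fun _ => trivial, fun _ => (adjK1K2Kp_lr _ i).symm⟩, iff_true]
    exact (hadjl (Sum.inl b) i).symm
  · rw [show ((K1K2Kp p).Adj (Sum.inr i) (Sum.inl (Sum.inr b))) ↔ True from
      ⟨fun _ => trivial, fun _ => (adjK1K2Kp_lr _ i).symm⟩, iff_true]
    exact (hadjl (Sum.inr b) i).symm
  · rw [adjK1K2Kp_rr]
    constructor
    · exact fun h he => h.ne (congrArg g he)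
    · intro h
      exact hQc (hmem i) (hmem j) (fun he => h (hginj he))

end Cfg

section Structure

variable (G) in
/-- The non-neighbours of `v` inside `K`. -/
noncomputable def misses (K : Finset V) (v : V) : Finset V :=
  K.filter (fun q => ¬ G.Adj v q)

variable (G) in
/-- The neighbours of `v` inside `K`. -/
noncomputable def nbrs (K : Finset V) (v : V) : Finset V :=
  K.filter (fun q => G.Adj v q)

variable (G) in
/-- `v` is a near-vertex: outside `K` with exactly one non-neighbour in `K`. -/
def inA (K : Finset V) (v : V) : Prop := v ∉ K ∧ (misses G K v).card = 1

variable (G) in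
/-- `v` is a far vertex. -/
def inB (K : Finset V) (v : V) : Prop := v ∉ K ∧ (misses G K v).card ≠ 1

variable (G) in
/-- The unique non-neighbour in `K` of a near-vertex. -/
noncomputable def missOf (K : Finset V) (v : V) : V :=
  if h : (misses G K v).card = 1 then (Finset.card_eq_one.mp h).choose else v

variable (G) in
/-- The set of colours of `K` forbidden for a far vertex `b`. -/
noncomputable def Bad (K : Finset V) (b : V) : Finset V :=
  K.filter (fun a => G.Adj b a ∨ ∃ v, inA G K v ∧ missOf G K v = a ∧ G.Adj b v)

variable {K : Finset V}

lemma misses_card_add_nbrs_card (v : V) :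
    (misses G K v).card + (nbrs G K v).card = K.card := by
  classical
  rw [misses, nbrs]
  have := Finset.card_filter_add_card_filter_not (s := K) (p := fun q => ¬ G.Adj v q)
  simpa using this

lemma missOf_spec {v : V} (h : (misses G K v).card = 1) :
    misses G K v = {missOf G K v} := by
  rw [missOf, dif_pos h]
  exact (Finset.card_eq_one.mp h).choose_spec

lemma missOf_mem {v : V} (h : (misses G K v).card = 1) : missOf G K v ∈ K := by
  have := missOf_spec (G := G) h
  have : missOf G K v ∈ misses G K v := by rw [this]; exact Finset.mem_singleton_self _
  exact Finset.mem_of_mem_filter _ this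

lemma missOf_not_adj {v : V} (h : (misses G K v).card = 1) : ¬ G.Adj v (missOf G K v) := by
  have h1 := missOf_spec (G := G) h
  have : missOf G K v ∈ misses G K v := by rw [h1]; exact Finset.mem_singleton_self _
  exact (Finset.mem_filter.mp this).2

lemma inA_adj {v : V} (h : inA G K v) {q : V} (hq : q ∈ K) (hne : q ≠ missOf G K v) :
    G.Adj v q := by
  by_contra hadj
  have : q ∈ misses G K v := Finset.mem_filter.mpr ⟨hq, hadj⟩
  rw [missOf_spec h.2] at this
  exact hne (Finset.mem_singleton.mp this)

lemma clique_card_le [Fintype V] {s : Finset V} (hs : G.IsClique s) :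
    s.card ≤ G.cliqueNum :=
  IsClique.card_le_cliqueNum (tc := hs)

section Main

variable [Fintype V]
variable (hK : G.IsNClique G.cliqueNum K)
variable (hp : 1 ≤ p) (hω3 : 3 ≤ G.cliqueNum) (hω3p : 3 * p - 1 ≤ G.cliqueNum)

include hK

lemma K_adj {q1 q2 : V} (h1 : q1 ∈ K) (h2 : q2 ∈ K) (hne : q1 ≠ q2) : G.Adj q1 q2 :=
  hK.isClique h1 h2 hne

lemma misses_nonempty {v : V} (hv : v ∉ K) : (misses G K v).Nonempty := by
  rw [Finset.nonempty_iff_ne_empty]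
  intro h
  have hall : ∀ q ∈ K, G.Adj v q := by
    intro q hq
    by_contra hadj
    have : q ∈ misses G K v := Finset.mem_filter.mpr ⟨hq, hadj⟩
    simp [h] at this
  have hcl : G.IsClique ((insert v K : Finset V) : Set V) := by
    rw [Finset.coe_insert]
    exact hK.isClique.insert (fun b hb hne => hall b hb)
  have := clique_card_le hcl
  rw [Finset.card_insert_of_notMem hv, hK.card_eq] at this
  omega

include hp hω3 hω3p

lemma dichotomy (hf2 : _root_.Free (K1K2Kp p) G) {v : V} (hv : v ∉ K) :
    (misses G K v).card = 1 ∨ (nbrs G K v).card ≤ p - 1 := by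
  by_contra hcon
  push_neg at hcon
  obtain ⟨h1, h2⟩ := hcon
  have hm1 : 1 ≤ (misses G K v).card := Finset.card_pos.mpr (misses_nonempty hK hv)
  have hm2 : 2 ≤ (misses G K v).card := by omega
  have hp2 : p ≤ (nbrs G K v).card := by omega
  obtain ⟨Q, hQsub, hQcard⟩ := Finset.exists_subset_card_eq hp2
  obtain ⟨y, hy, z, hz, hyz⟩ := Finset.one_lt_card.mp hm2
  have hyK : y ∈ K := Finset.mem_of_mem_filter _ hy
  have hzK : z ∈ K := Finset.mem_of_mem_filter _ hz
  have hQK : ∀ q ∈ Q, q ∈ K ∧ G.Adj v q := by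
    intro q hq
    have := hQsub hq
    exact ⟨Finset.mem_of_mem_filter _ this, (Finset.mem_filter.mp this).2⟩
  refine cfgK1K2Kp hf2 Q v y z ?_ hQcard ?_ ?_ ?_ ?_ ?_ ?_ ?_ ?_ ?_
  · exact hK.isClique.subset (fun q hq => (hQK q hq).1)
  · exact fun hvQ => hv (hQK v hvQ).1
  · exact fun hyQ => (Finset.mem_filter.mp hy).2 ((hQK y hyQ).2)
  · exact fun hzQ => (Finset.mem_filter.mp hz).2 ((hQK z hzQ).2)
  · exact K_adj hK hyK hzK hyz
  · exact (Finset.mem_filter.mp hy).2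
  · exact (Finset.mem_filter.mp hz).2
  · exact fun he => hv (he ▸ hyK)
  · exact fun he => hv (he ▸ hzK)
  · intro q hq
    obtain ⟨hqK, hqadj⟩ := hQK q hq
    refine ⟨hqadj, ?_, ?_⟩
    · refine K_adj hK hyK hqK (fun he => (Finset.mem_filter.mp hy).2 (he ▸ hqadj))
    · refine K_adj hK hzK hqK (fun he => (Finset.mem_filter.mp hz).2 (he ▸ hqadj))

lemma inB_nbrs_card (hf2 : _root_.Free (K1K2Kp p) G) {v : V} (hv : inB G K v) :
    (nbrs G K v).card ≤ p - 1 := by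
  rcases dichotomy hK hp hω3 hω3p hf2 hv.1 with h | h
  · exact absurd h hv.2
  · exact h

omit hK hp hω3 hω3p in
lemma not_adj_of_not_mem_nbrs {v q : V} (hq : q ∈ K) (h : q ∉ nbrs G K v) : ¬ G.Adj v q :=
  fun hadj => h (Finset.mem_filter.mpr ⟨hq, hadj⟩)

/-- Far vertices: adjacency is transitive (`G[B]` is `P₃`-free). -/
lemma btrans (hf1 : _root_.Free P3P2 G) (hf2 : _root_.Free (K1K2Kp p) G)
    {x b1 b2 : V} (hx : inB G K x) (hb1 : inB G K b1) (hb2 : inB G K b2)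
    (h1 : G.Adj x b1) (h2 : G.Adj b1 b2) (hne : x ≠ b2) : G.Adj x b2 := by
  by_contra hcon
  have hcx := inB_nbrs_card hK hp hω3 hω3p hf2 hx
  have hc1 := inB_nbrs_card hK hp hω3 hω3p hf2 hb1
  have hc2 := inB_nbrs_card hK hp hω3 hω3p hf2 hb2
  set U := nbrs G K x ∪ nbrs G K b1 ∪ nbrs G K b2 with hU
  have hUcard : U.card ≤ 3 * p - 3 := by
    calc U.card ≤ (nbrs G K x ∪ nbrs G K b1).card + (nbrs G K b2).card :=
          Finset.card_union_le _ _
    _ ≤ (nbrs G K x).card + (nbrs G K b1).card + (nbrs G K b2).card := by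
          have := Finset.card_union_le (nbrs G K x) (nbrs G K b1)
          omega
    _ ≤ 3 * p - 3 := by omega
  have hscard : 2 ≤ (K \ U).card := by
    have h1 := Finset.le_card_sdiff U K
    have := hK.card_eq
    omega
  obtain ⟨s, hs, t, ht, hst⟩ := Finset.one_lt_card.mp hscard
  have hsK := (Finset.mem_sdiff.mp hs).1
  have htK := (Finset.mem_sdiff.mp ht).1
  have hsU := (Finset.mem_sdiff.mp hs).2
  have htU := (Finset.mem_sdiff.mp ht).2
  have hnadj : ∀ w ∈ ({x, b1, b2} : Finset V), ¬ G.Adj w s ∧ ¬ G.Adj w t := by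
    intro w hw
    simp only [Finset.mem_insert, Finset.mem_singleton] at hw
    constructor
    · intro hadj
      apply hsU
      rcases hw with rfl | rfl | rfl
      · exact Finset.mem_union_left _ (Finset.mem_union_left _
          (Finset.mem_filter.mpr ⟨hsK, hadj⟩))
      · exact Finset.mem_union_left _ (Finset.mem_union_right _
          (Finset.mem_filter.mpr ⟨hsK, hadj⟩))
      · exact Finset.mem_union_right _ (Finset.mem_filter.mpr ⟨hsK, hadj⟩)
    · intro hadj
      apply htU
      rcases hw with rfl | rfl | rfl
      · exact Finset.mem_union_left _ (Finset.mem_union_left _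
          (Finset.mem_filter.mpr ⟨htK, hadj⟩))
      · exact Finset.mem_union_left _ (Finset.mem_union_right _
          (Finset.mem_filter.mpr ⟨htK, hadj⟩))
      · exact Finset.mem_union_right _ (Finset.mem_filter.mpr ⟨htK, hadj⟩)
  have hxmem : x ∈ ({x, b1, b2} : Finset V) := by simp
  have hb1mem : b1 ∈ ({x, b1, b2} : Finset V) := by simp
  have hb2mem : b2 ∈ ({x, b1, b2} : Finset V) := by simp
  refine cfgP3P2 hf1 x b1 b2 s t h1 h2 hcon (K_adj hK hsK htK hst) hne
    (hnadj x hxmem).1 (hnadj x hxmem).2 (hnadj b1 hb1mem).1 (hnadj b1 hb1mem).2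
    (hnadj b2 hb2mem).1 (hnadj b2 hb2mem).2
    ?_ ?_ ?_ ?_ ?_ ?_ <;>
  · rintro rfl
    first
      | exact hx.1 hsK | exact hx.1 htK | exact hb1.1 hsK | exact hb1.1 htK
      | exact hb2.1 hsK | exact hb2.1 htK

omit hp hω3 hω3p in
lemma AA_indep {u v : V} (hu : inA G K u) (hv : inA G K v)
    (hmiss : missOf G K u = missOf G K v) (hadj : G.Adj u v) : False := by
  set a := missOf G K u with ha
  have haK : a ∈ K := missOf_mem hu.2
  have hvK : v ∉ K := hv.1
  have huK : u ∉ K := hu.1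
  have hcl : G.IsClique ((insert u (insert v (K.erase a)) : Finset V) : Set V) := by
    rw [Finset.coe_insert, Finset.coe_insert]
    refine IsClique.insert (IsClique.insert ?_ ?_) ?_
    · exact hK.isClique.subset (by simp [Finset.coe_subset, Finset.erase_subset])
    · intro q hq hne
      simp only [Finset.mem_coe, Finset.mem_erase] at hq
      exact inA_adj hv hq.2 (hmiss ▸ hq.1)
    · rintro q (rfl | hq) hne
      · exact hadj
      · simp only [Finset.mem_coe, Finset.mem_erase] at hq
        exact inA_adj hu hq.2 hq.1
  have hcard := clique_card_le hcl
  have h1 : v ∉ K.erase a := fun h => hvK (Finset.mem_of_mem_erase h)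
  have h2 : u ∉ insert v (K.erase a) := by
    simp only [Finset.mem_insert]
    rintro (rfl | h)
    · exact hadj.ne rfl
    · exact huK (Finset.mem_of_mem_erase h)
  rw [Finset.card_insert_of_notMem h2, Finset.card_insert_of_notMem h1,
    Finset.card_erase_of_mem haK, hK.card_eq] at hcard
  have h0 : 1 ≤ G.cliqueNum := hK.card_eq ▸ Finset.card_pos.mpr ⟨a, haK⟩
  omega

lemma bad_card (hf2 : _root_.Free (K1K2Kp p) G) {b : V} (hb : inB G K b) :
    (Bad G K b).card ≤ p - 1 := by
  by_contra hcon
  have hpcard : p ≤ (Bad G K b).card := by omega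
  obtain ⟨S, hSsub, hScard⟩ := Finset.exists_subset_card_eq hpcard
  have hSK : ∀ a ∈ S, a ∈ K := by
    intro a ha
    have := hSsub ha
    simp only [Bad, Finset.mem_filter] at this
    exact this.1
  set w : V → V := fun a =>
    if h : ∃ v, inA G K v ∧ missOf G K v = a ∧ G.Adj b v ∧ ¬ G.Adj b a
    then h.choose else a with hwdef
  have hw : ∀ a ∈ S, G.Adj b (w a) ∧
      ((w a = a ∧ G.Adj b a) ∨
        (inA G K (w a) ∧ missOf G K (w a) = a ∧ ¬ G.Adj b a)) := by
    intro a ha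
    have haBad : a ∈ K ∧ (G.Adj b a ∨ ∃ v, inA G K v ∧ missOf G K v = a ∧ G.Adj b v) := by
      have := hSsub ha
      simp only [Bad, Finset.mem_filter] at this
      exact this
    by_cases hba : G.Adj b a
    · have hnex : ¬ ∃ v, inA G K v ∧ missOf G K v = a ∧ G.Adj b v ∧ ¬ G.Adj b a := by
        rintro ⟨v, _, _, _, hno⟩; exact hno hba
      have : w a = a := by rw [hwdef]; simp only [dif_neg hnex]
      rw [this]
      exact ⟨hba, Or.inl ⟨rfl, hba⟩⟩
    · have hex : ∃ v, inA G K v ∧ missOf G K v = a ∧ G.Adj b v ∧ ¬ G.Adj b a := by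
        rcases haBad.2 with h | ⟨v, h1, h2, h3⟩
        · exact absurd h hba
        · exact ⟨v, h1, h2, h3, hba⟩
      have hwa : w a = hex.choose := by rw [hwdef]; simp only [dif_pos hex]
      obtain ⟨h1, h2, h3, h4⟩ := hex.choose_spec
      rw [hwa]
      exact ⟨h3, Or.inr ⟨h1, h2, h4⟩⟩
  -- pairwise adjacency of the witnesses
  have hWadj : ∀ a1 ∈ S, ∀ a2 ∈ S, a1 ≠ a2 → G.Adj (w a1) (w a2) := by
    intro a1 ha1 a2 ha2 hne
    obtain ⟨hb1, hc1⟩ := hw a1 ha1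
    obtain ⟨hb2, hc2⟩ := hw a2 ha2
    rcases hc1 with ⟨he1, hba1⟩ | ⟨hA1, hm1, hba1⟩ <;>
      rcases hc2 with ⟨he2, hba2⟩ | ⟨hA2, hm2, hba2⟩
    · rw [he1, he2]; exact K_adj hK (hSK a1 ha1) (hSK a2 ha2) hne
    · rw [he1]
      exact (inA_adj hA2 (hSK a1 ha1) (by rw [hm2]; exact hne)).symm
    · rw [he2]
      exact inA_adj hA1 (hSK a2 ha2) (by rw [hm1]; exact hne.symm)
    · -- two A-witnesses of distinct classes must be adjacent
      by_contra hvv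
      have hQQ : p ≤ (K \ {a1, a2}).card := by
        have h1 := Finset.le_card_sdiff ({a1, a2} : Finset V) K
        have h2 : ({a1, a2} : Finset V).card ≤ 2 := by
          have := Finset.card_insert_le a1 ({a2} : Finset V)
          simpa using this
        have := hK.card_eq
        omega
      obtain ⟨Q, hQsub, hQcard⟩ := Finset.exists_subset_card_eq hQQ
      have hQK : ∀ q ∈ Q, q ∈ K ∧ q ≠ a1 ∧ q ≠ a2 := by
        intro q hq
        have := Finset.mem_sdiff.mp (hQsub hq)
        simp only [Finset.mem_insert, Finset.mem_singleton] at this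
        exact ⟨this.1, fun h => this.2 (Or.inl h), fun h => this.2 (Or.inr h)⟩
      have ha2K : a2 ∈ K := hSK a2 ha2
      refine cfgK1K2Kp hf2 Q (w a2) (w a1) a2
        (hK.isClique.subset (fun q hq => (hQK q hq).1)) hQcard
        (fun h => hA2.1 (hQK _ h).1) (fun h => hA1.1 (hQK _ h).1)
        (fun h => (hQK _ h).2.2 rfl)
        (inA_adj hA1 ha2K (by rw [hm1]; exact hne.symm))
        (fun h => hvv h.symm)
        (by intro hc; exact missOf_not_adj hA2.2 (by rw [hm2]; exact hc))
        ?_ (fun h => hA2.1 (by rw [h]; exact ha2K)) ?_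
      · intro h
        rw [← h] at hm1
        rw [hm1] at hm2
        exact hne hm2
      · intro q hq
        obtain ⟨hqK, hq1, hq2⟩ := hQK q hq
        refine ⟨inA_adj hA2 hqK (by rw [hm2]; exact hq2),
          inA_adj hA1 hqK (by rw [hm1]; exact hq1),
          K_adj hK ha2K hqK (fun h => hq2 h.symm)⟩
  set W := S.image w with hWdef
  have hWcard : W.card = p := by
    rw [hWdef, Finset.card_image_of_injOn, hScard]
    intro a1 ha1 a2 ha2 he
    by_contra hne
    exact (hWadj a1 ha1 a2 ha2 hne).ne he
  have hWmem : ∀ q ∈ W, ∃ a ∈ S, w a = q := by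
    intro q hq
    obtain ⟨a, ha, he⟩ := Finset.mem_image.mp hq
    exact ⟨a, ha, he⟩
  have hWb : ∀ q ∈ W, G.Adj b q := by
    intro q hq
    obtain ⟨a, ha, he⟩ := hWmem q hq
    exact he ▸ (hw a ha).1
  have hWclique : G.IsClique (W : Set V) := by
    intro x hx y hy hne
    obtain ⟨a1, ha1, he1⟩ := hWmem x hx
    obtain ⟨a2, ha2, he2⟩ := hWmem y hy
    have : a1 ≠ a2 := by rintro rfl; rw [← he1, ← he2] at hne; exact hne rfl
    exact he1 ▸ he2 ▸ hWadj a1 ha1 a2 ha2 this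
  -- find two fully non-adjacent vertices of K
  have hRcard : 2 ≤ (K \ (nbrs G K b ∪ S)).card := by
    have h1 := Finset.le_card_sdiff (nbrs G K b ∪ S) K
    have h2 := Finset.card_union_le (nbrs G K b) S
    have h3 := inB_nbrs_card hK hp hω3 hω3p hf2 hb
    have := hK.card_eq
    omega
  obtain ⟨x1, hx1, x2, hx2, hx12⟩ := Finset.one_lt_card.mp hRcard
  have hx1K := (Finset.mem_sdiff.mp hx1).1
  have hx2K := (Finset.mem_sdiff.mp hx2).1
  have hx1n : ¬ G.Adj b x1 := by
    have := (Finset.mem_sdiff.mp hx1).2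
    exact not_adj_of_not_mem_nbrs hx1K (fun h => this (Finset.mem_union_left _ h))
  have hx2n : ¬ G.Adj b x2 := by
    have := (Finset.mem_sdiff.mp hx2).2
    exact not_adj_of_not_mem_nbrs hx2K (fun h => this (Finset.mem_union_left _ h))
  have hx1S : x1 ∉ S := fun h => (Finset.mem_sdiff.mp hx1).2 (Finset.mem_union_right _ h)
  have hx2S : x2 ∉ S := fun h => (Finset.mem_sdiff.mp hx2).2 (Finset.mem_union_right _ h)
  have hxW : ∀ x', x' ∈ K → x' ∉ S → x' ∉ W ∧ ∀ q ∈ W, G.Adj x' q := by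
    intro x' hxK hxS
    constructor
    · intro hmem
      obtain ⟨a, ha, he⟩ := hWmem x' hmem
      rcases (hw a ha).2 with ⟨he2, _⟩ | ⟨hA, hm, _⟩
      · rw [he2] at he; exact hxS (he ▸ ha)
      · rw [he] at hA; exact hA.1 hxK
    · intro q hq
      obtain ⟨a, ha, he⟩ := hWmem q hq
      have hax : a ≠ x' := fun h => hxS (h ▸ ha)
      rcases (hw a ha).2 with ⟨he2, _⟩ | ⟨hA, hm, _⟩
      · rw [← he, he2]; exact K_adj hK hxK (hSK a ha) (fun h => hax h.symm)
      · rw [← he]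
        exact (inA_adj hA hxK (by rw [hm]; exact fun h => hax h.symm)).symm
  have hbK : b ∉ K := hb.1
  refine cfgK1K2Kp hf2 W b x1 x2 hWclique hWcard
    (fun h => (hWb b h).ne rfl) ((hxW x1 hx1K hx1S).1) ((hxW x2 hx2K hx2S).1)
    (K_adj hK hx1K hx2K hx12) hx1n hx2n
    (fun h => hbK (h ▸ hx1K)) (fun h => hbK (h ▸ hx2K)) ?_
  intro q hq
  exact ⟨hWb q hq, (hxW x1 hx1K hx1S).2 q hq, (hxW x2 hx2K hx2S).2 q hq⟩

end Main

end Structure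

end StmtAux

theorem stmt_6 {V : Type*} [Fintype V] (G : SimpleGraph V) (p : ℕ) (hp : 1 ≤ p)
    (hf1 : _root_.Free P3P2 G) (hf2 : _root_.Free (K1K2Kp p) G)
    (hω : max 3 (3 * p - 1) ≤ G.cliqueNum) :
    G.chromaticNumber ≤ (G.cliqueNum + p - 1 : ℕ) := by
  classical
  open StmtAux Finset in
  obtain ⟨K, hK⟩ := G.exists_isNClique_cliqueNum
  have hω3 : 3 ≤ G.cliqueNum := le_trans (le_max_left _ _) hω
  have hω3p : 3 * p - 1 ≤ G.cliqueNum := le_trans (le_max_right _ _) hω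
  have hKpos : 0 < K.card := by rw [hK.card_eq]; omega
  obtain ⟨k0, hk0⟩ := Finset.card_pos.mp hKpos
  -- the colour type
  set Color := (↥K ⊕ Fin (p - 1)) with hColor
  have junk : Color := Sum.inl ⟨k0, hk0⟩
  -- allowed colours for far vertices
  set allowed : V → Finset Color := fun b =>
    ((K \ Bad G K b).attach.image
        (fun a => Sum.inl ⟨a.1, (Finset.mem_sdiff.mp a.2).1⟩)) ∪
      (Finset.univ.image Sum.inr) with hallowed
  have hallowed_card : ∀ b, inB G K b → G.cliqueNum ≤ (allowed b).card := by
    intro b hb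
    have hdisj : Disjoint
        ((K \ Bad G K b).attach.image
          (fun a => (Sum.inl ⟨a.1, (Finset.mem_sdiff.mp a.2).1⟩ : Color)))
        (Finset.univ.image (Sum.inr : Fin (p-1) → Color)) := by
      rw [Finset.disjoint_left]
      intro c hc1 hc2
      obtain ⟨a, _, ha⟩ := Finset.mem_image.mp hc1
      obtain ⟨i, _, hi⟩ := Finset.mem_image.mp hc2
      rw [← ha] at hi
      exact Sum.inl_ne_inr hi.symm
    have hcard1 : ((K \ Bad G K b).attach.image
        (fun a => (Sum.inl ⟨a.1, (Finset.mem_sdiff.mp a.2).1⟩ : Color))).card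
        = (K \ Bad G K b).card := by
      rw [Finset.card_image_of_injOn, Finset.card_attach]
      intro a1 _ a2 _ he
      simp only [Sum.inl.injEq, Subtype.mk.injEq] at he
      exact Subtype.ext he
    have hcard2 : (Finset.univ.image (Sum.inr : Fin (p-1) → Color)).card = p - 1 := by
      rw [Finset.card_image_of_injective _ Sum.inr_injective, Finset.card_univ,
        Fintype.card_fin]
    have hsdiff : K.card - (p-1) ≤ (K \ Bad G K b).card := by
      have h1 := Finset.le_card_sdiff (Bad G K b) K
      have h2 := bad_card hK hp hω3 hω3p hf2 hb
      omega
    rw [hallowed]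
    rw [Finset.card_union_of_disjoint hdisj, hcard1, hcard2]
    have := hK.card_eq
    omega
  have hallowed_mem : ∀ b c, c ∈ allowed b →
      (∃ a : ↥K, c = Sum.inl a ∧ (a : V) ∉ Bad G K b) ∨ (∃ i, c = Sum.inr i) := by
    intro b c hc
    rw [hallowed] at hc
    rcases Finset.mem_union.mp hc with h | h
    · obtain ⟨a, _, ha⟩ := Finset.mem_image.mp h
      exact Or.inl ⟨⟨a.1, (Finset.mem_sdiff.mp a.2).1⟩, ha.symm,
        (Finset.mem_sdiff.mp a.2).2⟩
    · obtain ⟨i, _, hi⟩ := Finset.mem_image.mp h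
      exact Or.inr ⟨i, hi.symm⟩
  -- the component (clique) of a far vertex
  set cls : V → Finset V := fun b =>
    Finset.univ.filter (fun x => inB G K x ∧ (x = b ∨ G.Adj b x)) with hcls
  have hclsmem : ∀ b x, x ∈ cls b ↔ inB G K x ∧ (x = b ∨ G.Adj b x) := by
    intro b x
    rw [hcls]
    simp
  have hclsSelf : ∀ b, inB G K b → b ∈ cls b := by
    intro b hb
    rw [hclsmem]
    exact ⟨hb, Or.inl rfl⟩
  have hclsClique : ∀ b, inB G K b → G.IsClique (cls b : Set V) := by
    intro b hb x hx y hy hne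
    rw [Finset.mem_coe, hclsmem] at hx hy
    obtain ⟨hxB, hx2⟩ := hx
    obtain ⟨hyB, hy2⟩ := hy
    rcases hx2 with rfl | hx2
    · rcases hy2 with rfl | hy2
      · exact absurd rfl hne
      · exact hy2
    · rcases hy2 with rfl | hy2
      · exact hx2.symm
      · exact btrans hK hp hω3 hω3p hf1 hf2 hxB hb hyB hx2.symm hy2 hne
  have hclsEq : ∀ b1 b2, inB G K b1 → inB G K b2 → G.Adj b1 b2 → cls b1 = cls b2 := by
    intro b1 b2 hb1 hb2 hadj
    ext x
    rw [hclsmem, hclsmem]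
    constructor
    · rintro ⟨hxB, rfl | hx⟩
      · exact ⟨hxB, Or.inr hadj.symm⟩
      · by_cases hxb2 : x = b2
        · exact ⟨hxB, Or.inl hxb2⟩
        · exact ⟨hxB, Or.inr (btrans hK hp hω3 hω3p hf1 hf2 hb2 hb1 hxB
            hadj.symm hx (fun h => hxb2 h.symm))⟩
    · rintro ⟨hxB, rfl | hx⟩
      · exact ⟨hxB, Or.inr hadj⟩
      · by_cases hxb1 : x = b1
        · exact ⟨hxB, Or.inl hxb1⟩
        · exact ⟨hxB, Or.inr (btrans hK hp hω3 hω3p hf1 hf2 hb1 hb2 hxB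
            hadj hx (fun h => hxb1 h.symm))⟩
  -- Hall's theorem on each component
  have hHall : ∀ b, inB G K b →
      ∃ f : V → Color, Set.InjOn f (cls b : Set V) ∧ ∀ x ∈ cls b, f x ∈ allowed x := by
    intro b hb
    have hScard : (cls b).card ≤ G.cliqueNum := clique_card_le (hclsClique b hb)
    have hcond : ∀ s : Finset ↥(cls b),
        s.card ≤ (s.biUnion (fun x => allowed ↑x)).card := by
      intro s
      rcases s.eq_empty_or_nonempty with rfl | ⟨x, hx⟩
      · simp
      · have h1 : s.card ≤ (cls b).card := by
          have := Finset.card_le_univ s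
          rwa [Fintype.card_coe] at this
        have hxB : inB G K ↑x := ((hclsmem b ↑x).mp x.2).1
        have h2 : G.cliqueNum ≤ (allowed ↑x).card := hallowed_card ↑x hxB
        have h3 : (allowed ↑x).card ≤ (s.biUnion (fun x => allowed ↑x)).card :=
          Finset.card_le_card
            (Finset.subset_biUnion_of_mem (fun x : ↥(cls b) => allowed ↑x) hx)
        omega
    obtain ⟨f0, hf0inj, hf0mem⟩ :=
      (Finset.all_card_le_biUnion_card_iff_exists_injective
        (fun x : ↥(cls b) => allowed ↑x)).mp hcond
    refine ⟨fun v => if h : v ∈ cls b then f0 ⟨v, h⟩ else junk, ?_, ?_⟩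
    · intro x hx y hy he
      rw [Finset.mem_coe] at hx hy
      simp only [dif_pos hx, dif_pos hy] at he
      have := hf0inj he
      exact congrArg Subtype.val this
    · intro x hx
      simp only [dif_pos hx]
      exact hf0mem ⟨x, hx⟩
  -- glue the component colourings by choice
  set F : Finset V → V → Color := fun S =>
    if h : ∃ f : V → Color, Set.InjOn f (S : Set V) ∧ ∀ x ∈ S, f x ∈ allowed x
    then h.choose else fun _ => junk with hF
  have hFspec : ∀ S : Finset V,
      (∃ f : V → Color, Set.InjOn f (S : Set V) ∧ ∀ x ∈ S, f x ∈ allowed x) →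
      Set.InjOn (F S) (S : Set V) ∧ ∀ x ∈ S, F S x ∈ allowed x := by
    intro S h
    rw [hF]
    simp only [dif_pos h]
    exact h.choose_spec
  -- the colouring
  set col : V → Color := fun v =>
    if h : v ∈ K then Sum.inl ⟨v, h⟩
    else if h2 : (misses G K v).card = 1 then Sum.inl ⟨missOf G K v, missOf_mem h2⟩
    else F (cls v) v with hcol
  have hcolK : ∀ {u : V} (h : u ∈ K), col u = Sum.inl ⟨u, h⟩ := by
    intro u h; rw [hcol]; simp only [dif_pos h]
  have hcolA : ∀ {u : V} (h : u ∉ K) (h2 : (misses G K u).card = 1),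
      col u = Sum.inl ⟨missOf G K u, missOf_mem h2⟩ := by
    intro u h h2; rw [hcol]; simp only [dif_neg h, dif_pos h2]
  have hcolB : ∀ {u : V}, u ∉ K → (misses G K u).card ≠ 1 → col u = F (cls u) u := by
    intro u h h2; rw [hcol]; simp only [dif_neg h, dif_neg h2]
  -- membership of far-vertex colours
  have hcolBmem : ∀ {u : V} (hu : inB G K u), col u ∈ allowed u := by
    intro u hu
    rw [hcolB hu.1 hu.2]
    exact (hFspec (cls u) (hHall u hu)).2 u (hclsSelf u hu)
  -- properness
  have hproper : ∀ {u v : V}, G.Adj u v → col u ≠ col v := by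
    have hinl : ∀ (a b : ↥K), (Sum.inl a : Color) = Sum.inl b → (a : V) = (b : V) :=
      fun a b h => congrArg Subtype.val (Sum.inl_injective h)
    -- first the asymmetric cases as helpers
    have caseKA : ∀ {u v : V}, G.Adj u v → u ∈ K → v ∉ K →
        ∀ h2 : (misses G K v).card = 1, col u ≠ col v := by
      intro u v huv hu hv h2 heq
      rw [hcolK hu, hcolA hv h2] at heq
      have heq' : u = missOf G K v := hinl _ _ heq
      exact missOf_not_adj h2 (heq' ▸ huv.symm)
    have caseKB : ∀ {u v : V}, G.Adj u v → u ∈ K → inB G K v → col u ≠ col v := by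
      intro u v huv hu hv heq
      rw [hcolK hu] at heq
      rcases hallowed_mem v (col v) (hcolBmem hv) with ⟨a, ha, hnb⟩ | ⟨i, hi⟩
      · rw [ha] at heq
        have heq' := hinl _ _ heq
        apply hnb
        rw [← heq']
        simp only [Bad, Finset.mem_filter]
        exact ⟨hu, Or.inl huv.symm⟩
      · rw [hi] at heq
        exact Sum.inl_ne_inr heq
    have caseAB : ∀ {u v : V}, G.Adj u v → u ∉ K →
        ∀ h2 : (misses G K u).card = 1, inB G K v → col u ≠ col v := by
      intro u v huv hu h2 hv heq
      rw [hcolA hu h2] at heq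
      rcases hallowed_mem v (col v) (hcolBmem hv) with ⟨a, ha, hnb⟩ | ⟨i, hi⟩
      · rw [ha] at heq
        have heq' := hinl _ _ heq
        apply hnb
        rw [← heq']
        simp only [Bad, Finset.mem_filter]
        exact ⟨missOf_mem h2, Or.inr ⟨u, ⟨hu, h2⟩, rfl, huv.symm⟩⟩
      · rw [hi] at heq
        exact Sum.inl_ne_inr heq
    intro u v huv heq
    by_cases hu : u ∈ K <;> by_cases hv : v ∈ K
    · rw [hcolK hu, hcolK hv] at heq
      exact huv.ne (hinl _ _ heq)
    · by_cases h2 : (misses G K v).card = 1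
      · exact caseKA huv hu hv h2 heq
      · exact caseKB huv hu ⟨hv, h2⟩ heq
    · by_cases h2 : (misses G K u).card = 1
      · exact caseKA huv.symm hv hu h2 heq.symm
      · exact caseKB huv.symm hv ⟨hu, h2⟩ heq.symm
    · by_cases h2u : (misses G K u).card = 1 <;> by_cases h2v : (misses G K v).card = 1
      · -- A-A
        rw [hcolA hu h2u, hcolA hv h2v] at heq
        exact AA_indep hK ⟨hu, h2u⟩ ⟨hv, h2v⟩ (hinl _ _ heq) huv
      · exact caseAB huv hu h2u ⟨hv, h2v⟩ heq
      · exact caseAB huv.symm hv h2v ⟨hu, h2u⟩ heq.symm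
      · -- B-B
        have hBu : inB G K u := ⟨hu, h2u⟩
        have hBv : inB G K v := ⟨hv, h2v⟩
        have hequ : col u = F (cls v) u :=
          (hcolB hu h2u).trans (congrArg (fun S => F S u) (hclsEq u v hBu hBv huv))
        have heqv : col v = F (cls v) v := hcolB hv h2v
        have heq2 : F (cls v) u = F (cls v) v := by rw [← hequ, ← heqv]; exact heq
        have hinj := (hFspec (cls v) (hHall v hBv)).1
        have humem : u ∈ cls v := by rw [← hclsEq u v hBu hBv huv]; exact hclsSelf u hBu
        exact huv.ne (hinj (Finset.mem_coe.mpr humem)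
          (Finset.mem_coe.mpr (hclsSelf v hBv)) heq2)
  -- conclude
  have hcolcard : Fintype.card Color = G.cliqueNum + p - 1 := by
    have h0 : Fintype.card Color = Fintype.card (↥K ⊕ Fin (p - 1)) := rfl
    rw [h0, Fintype.card_sum, Fintype.card_coe, Fintype.card_fin, hK.card_eq]
    omega
  have hcolorable : G.Colorable (G.cliqueNum + p - 1) := by
    rw [← hcolcard]
    exact (SimpleGraph.Coloring.mk col hproper).colorable
  exact hcolorable.chromaticNumber_le
end

section
/- For every p ≥ 1 and ω ≥ p+1, there exists a {P3 ∪ P2, (K1 ∪ K2) + Kp}-free graph G* with clique number ω, independence number 2, and exactly 2ω + p − 1 vertices, so that χ(G*) ≥ ω + ⌈(p−1)/2⌉. -/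
open SimpleGraph

open SimpleGraph

namespace Stmt7Aux

/-- vertex type: X ⊕ (Y ⊕ Z) -/
abbrev V (p ω : ℕ) := Fin ω ⊕ (Fin ω ⊕ Fin (p-1))

def rel (p ω : ℕ) : V p ω → V p ω → Prop := fun a b =>
  match a, b with
  | Sum.inl _, Sum.inl _ => True
  | Sum.inr (Sum.inl _), Sum.inr (Sum.inl _) => True
  | Sum.inr (Sum.inr _), Sum.inr (Sum.inr _) => True
  | Sum.inl i, Sum.inr (Sum.inl j) => i.val = j.val ∧ i.val + 1 < p
  | Sum.inl i, Sum.inr (Sum.inr k) => i.val ≠ k.val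
  | Sum.inr (Sum.inl j), Sum.inr (Sum.inr k) => j.val ≠ k.val
  | _, _ => False

def G' (p ω : ℕ) : SimpleGraph (V p ω) := fromRel (rel p ω)

variable {p ω : ℕ}

@[simp] lemma adj_xx {i j : Fin ω} : (G' p ω).Adj (Sum.inl i) (Sum.inl j) ↔ i ≠ j := by
  simp [G', rel, fromRel_adj]

@[simp] lemma adj_yy {i j : Fin ω} :
    (G' p ω).Adj (Sum.inr (Sum.inl i)) (Sum.inr (Sum.inl j)) ↔ i ≠ j := by
  simp [G', rel, fromRel_adj]

@[simp] lemma adj_zz {i j : Fin (p-1)} :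
    (G' p ω).Adj (Sum.inr (Sum.inr i)) (Sum.inr (Sum.inr j)) ↔ i ≠ j := by
  simp [G', rel, fromRel_adj]

@[simp] lemma adj_xy {i j : Fin ω} :
    (G' p ω).Adj (Sum.inl i) (Sum.inr (Sum.inl j)) ↔ (i.val = j.val ∧ i.val + 1 < p) := by
  simp [G', rel, fromRel_adj]


@[simp] lemma adj_xz {i : Fin ω} {k : Fin (p-1)} :
    (G' p ω).Adj (Sum.inl i) (Sum.inr (Sum.inr k)) ↔ i.val ≠ k.val := by
  simp [G', rel, fromRel_adj]


@[simp] lemma adj_yz {j : Fin ω} {k : Fin (p-1)} :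
    (G' p ω).Adj (Sum.inr (Sum.inl j)) (Sum.inr (Sum.inr k)) ↔ j.val ≠ k.val := by
  simp [G', rel, fromRel_adj]


@[simp] lemma adj_yx {i j : Fin ω} :
    (G' p ω).Adj (Sum.inr (Sum.inl j)) (Sum.inl i) ↔ (i.val = j.val ∧ i.val + 1 < p) := by
  rw [adj_comm]; exact adj_xy

@[simp] lemma adj_zx {i : Fin ω} {k : Fin (p-1)} :
    (G' p ω).Adj (Sum.inr (Sum.inr k)) (Sum.inl i) ↔ i.val ≠ k.val := by
  rw [adj_comm]; exact adj_xz

@[simp] lemma adj_zy {j : Fin ω} {k : Fin (p-1)} :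
    (G' p ω).Adj (Sum.inr (Sum.inr k)) (Sum.inr (Sum.inl j)) ↔ j.val ≠ k.val := by
  rw [adj_comm]; exact adj_yz


end Stmt7Aux

namespace Stmt7Aux
variable {p ω : ℕ}

lemma no_indep_three (hp : 1 ≤ p) {a b c : V p ω}
    (hab : a ≠ b) (hac : a ≠ c) (hbc : b ≠ c)
    (nab : ¬ (G' p ω).Adj a b) (nac : ¬ (G' p ω).Adj a c) (nbc : ¬ (G' p ω).Adj b c) :
    False := by
  rcases a with i | j | k <;> rcases b with i' | j' | k' <;> rcases c with i'' | j'' | k'' <;>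
    (simp only [adj_xx, adj_yy, adj_zz, adj_xy, adj_xz, adj_yz, adj_yx, adj_zx, adj_zy,
      ne_eq, Sum.inl.injEq, Sum.inr.injEq, not_and, not_not, Fin.ext_iff, reduceCtorEq,
      not_false_eq_true, not_true_eq_false] at * <;> fin_omega)

lemma cliqueNum_eq_of {α : Type*} [Fintype α] {G : SimpleGraph α} {k : ℕ} {s : Finset α}
    (h1 : G.IsNClique k s) (h2 : G.CliqueFree (k+1)) : G.cliqueNum = k := by
  refine le_antisymm ?_ ?_
  · by_contra h
    push_neg at h
    obtain ⟨t, ht⟩ := G.exists_isNClique_cliqueNum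
    obtain ⟨u, hu, hcard⟩ := Finset.exists_subset_card_eq (s := t) (n := k+1) (by rw [ht.2]; omega)
    exact h2 u ⟨ht.1.subset hu, hcard⟩
  · rw [← h1.2]
    exact IsClique.card_le_cliqueNum (tc := h1.1)

lemma xclique (hp : 1 ≤ p) (hω : p + 1 ≤ ω) :
    (G' p ω).IsNClique ω ((Finset.univ : Finset (Fin ω)).map ⟨Sum.inl, Sum.inl_injective⟩) := by
  constructor
  · intro a ha b hb hne
    simp only [Finset.coe_map, Set.mem_image, Finset.mem_coe, Finset.mem_univ,
      Function.Embedding.coeFn_mk, true_and, Finset.coe_univ, Set.image_univ,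
      Set.mem_range] at ha hb
    obtain ⟨i, rfl⟩ := ha
    obtain ⟨j, rfl⟩ := hb
    simpa using fun h => hne (by rw [h])
  · simp

lemma card_le_of_no_x (hω : p + 1 ≤ ω) {s : Finset (V p ω)}
    (hc : (G' p ω).IsClique s) (hX : ∀ m : Fin ω, Sum.inl m ∉ s) : s.card ≤ ω := by
  have := Finset.card_le_card_of_injOn
    (f := Sum.elim (fun _ : Fin ω => (0:ℕ)) (Sum.elim (fun m => m.val) (fun k => k.val)))
    (s := s) (t := Finset.range ω) ?_ ?_
  · simpa using this
  · intro a ha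
    rcases a with m | m | k
    · exact absurd ha (hX m)
    · simp only [Sum.elim_inr, Sum.elim_inl, Finset.mem_coe, Finset.mem_range]; exact m.isLt
    · simp only [Sum.elim_inr, Finset.mem_coe, Finset.mem_range]; have := k.isLt; omega
  · intro a ha b hb hfab
    rcases a with m | m | k
    · exact absurd ha (hX m)
    · rcases b with m' | m' | k'
      · exact absurd hb (hX m')
      · simp only [Sum.elim_inr, Sum.elim_inl] at hfab
        rw [Fin.ext hfab]
      · simp only [Sum.elim_inr, Sum.elim_inl] at hfab
        have h1 := hc (Finset.mem_coe.mpr ha) (Finset.mem_coe.mpr hb) (by simp)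
        rw [adj_yz] at h1
        exact absurd hfab h1
    · rcases b with m' | m' | k'
      · exact absurd hb (hX m')
      · simp only [Sum.elim_inr, Sum.elim_inl] at hfab
        have h1 := hc (Finset.mem_coe.mpr hb) (Finset.mem_coe.mpr ha) (by simp)
        rw [adj_yz] at h1
        exact absurd hfab.symm h1
      · simp only [Sum.elim_inr] at hfab
        rw [Fin.ext hfab]

lemma card_le_of_no_y (hω : p + 1 ≤ ω) {s : Finset (V p ω)}
    (hc : (G' p ω).IsClique s) (hY : ∀ m : Fin ω, Sum.inr (Sum.inl m) ∉ s) : s.card ≤ ω := by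
  have := Finset.card_le_card_of_injOn
    (f := Sum.elim (fun m : Fin ω => m.val) (Sum.elim (fun _ => (0:ℕ)) (fun k => k.val)))
    (s := s) (t := Finset.range ω) ?_ ?_
  · simpa using this
  · intro a ha
    rcases a with m | m | k
    · simp only [Sum.elim_inl, Finset.mem_coe, Finset.mem_range]; exact m.isLt
    · exact absurd ha (hY m)
    · simp only [Sum.elim_inr, Finset.mem_coe, Finset.mem_range]; have := k.isLt; omega
  · intro a ha b hb hfab
    rcases a with m | m | k
    · rcases b with m' | m' | k'
      · simp only [Sum.elim_inl] at hfab
        rw [Fin.ext hfab]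
      · exact absurd hb (hY m')
      · simp only [Sum.elim_inl, Sum.elim_inr] at hfab
        have h1 := hc (Finset.mem_coe.mpr ha) (Finset.mem_coe.mpr hb) (by simp)
        rw [adj_xz] at h1
        exact absurd hfab h1
    · exact absurd ha (hY m)
    · rcases b with m' | m' | k'
      · simp only [Sum.elim_inl, Sum.elim_inr] at hfab
        have h1 := hc (Finset.mem_coe.mpr hb) (Finset.mem_coe.mpr ha) (by simp)
        rw [adj_xz] at h1
        exact absurd hfab.symm h1
      · exact absurd hb (hY m')
      · simp only [Sum.elim_inr] at hfab
        rw [Fin.ext hfab]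

lemma cliqueFree (hp : 1 ≤ p) (hω : p + 1 ≤ ω) : (G' p ω).CliqueFree (ω + 1) := by
  intro s hs
  by_cases hX : ∃ i, Sum.inl i ∈ s
  · by_cases hY : ∃ j, Sum.inr (Sum.inl j) ∈ s
    · obtain ⟨i, hi⟩ := hX
      obtain ⟨j, hj⟩ := hY
      have hij := hs.1 (Finset.mem_coe.mpr hi) (Finset.mem_coe.mpr hj) (by simp)
      rw [adj_xy] at hij
      have hcard : s.card ≤ p + 1 := by
        have := Finset.card_le_card_of_injOn
          (f := Sum.elim (fun _ : Fin ω => p - 1) (Sum.elim (fun _ => p) (fun k => k.val)))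
          (s := s) (t := Finset.range (p+1)) ?_ ?_
        · simpa using this
        · intro a ha
          rcases a with m | m | k <;>
            simp only [Sum.elim_inl, Sum.elim_inr, Finset.mem_coe, Finset.mem_range]
          · omega
          · omega
          · have := k.isLt; omega
        · intro a ha b hb hfab
          rcases a with m | m | k <;> rcases b with m' | m' | k' <;>
            simp only [Sum.elim_inl, Sum.elim_inr] at hfab
          · have h1 := hs.1 (Finset.mem_coe.mpr ha) (Finset.mem_coe.mpr hj) (by simp)
            have h2 := hs.1 (Finset.mem_coe.mpr hb) (Finset.mem_coe.mpr hj) (by simp)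
            rw [adj_xy] at h1 h2
            have : m = m' := Fin.ext (by omega)
            rw [this]
          · exact absurd hfab (by omega)
          · exact absurd hfab (by have := k'.isLt; omega)
          · exact absurd hfab (by omega)
          · have h1 := hs.1 (Finset.mem_coe.mpr ha) (Finset.mem_coe.mpr hi) (by simp)
            have h2 := hs.1 (Finset.mem_coe.mpr hb) (Finset.mem_coe.mpr hi) (by simp)
            rw [adj_yx] at h1 h2
            have : m = m' := Fin.ext (by omega)
            rw [this]
          · exact absurd hfab (by have := k'.isLt; omega)
          · exact absurd hfab (by have := k.isLt; omega)
          · exact absurd hfab (by have := k.isLt; omega)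
          · rw [Fin.ext hfab]
      have := hs.2
      omega
    · push_neg at hY
      have := card_le_of_no_y hω hs.1 hY
      have := hs.2
      omega
  · push_neg at hX
    have := card_le_of_no_x hω hs.1 hX
    have := hs.2
    omega

end Stmt7Aux
namespace Stmt7Aux
open SimpleGraph
variable {p ω : ℕ}

/-- index of a vertex -/
def N : V p ω → ℕ := Sum.elim Fin.val (Sum.elim Fin.val Fin.val)

@[simp] lemma N_x {i : Fin ω} : N (Sum.inl i : V p ω) = i.val := rfl
@[simp] lemma N_y {i : Fin ω} : N (Sum.inr (Sum.inl i) : V p ω) = i.val := rfl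
@[simp] lemma N_z {k : Fin (p-1)} : N (Sum.inr (Sum.inr k) : V p ω) = k.val := rfl

/-- the X ↔ Y swap automorphism -/
def σf : V p ω → V p ω :=
  Sum.elim (fun i => Sum.inr (Sum.inl i)) (Sum.elim (fun j => Sum.inl j) (fun k => Sum.inr (Sum.inr k)))

lemma σf_invol : ∀ a : V p ω, σf (σf a) = a := by
  intro a; rcases a with i | j | k <;> rfl

def σ : G' p ω ≃g G' p ω where
  toEquiv := Equiv.mk σf σf σf_invol σf_invol
  map_rel_iff' := by
    intro a b
    rcases a with i | j | k <;> rcases b with i' | j' | k' <;>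
      simp only [Equiv.coe_fn_mk, σf, Sum.elim_inl, Sum.elim_inr, adj_xx, adj_yy, adj_zz,
        adj_xy, adj_xz, adj_yz, adj_yx, adj_zx, adj_zy, ne_eq, Fin.ext_iff] <;>
      omega

lemma blockYY (hp : 1 ≤ p) (i a b : Fin ω) (hab : a ≠ b) (Q : Fin p → V p ω)
    (hUQ : ∀ q, (G' p ω).Adj (Sum.inl i) (Q q))
    (hVQ : ∀ q, (G' p ω).Adj (Sum.inr (Sum.inl a)) (Q q))
    (hWQ : ∀ q, (G' p ω).Adj (Sum.inr (Sum.inl b)) (Q q))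
    (injQ : Function.Injective Q) : False := by
  have hshape : ∀ q, (Q q = Sum.inr (Sum.inl i) ∧ i.val + 1 < p) ∨
      (∃ m : Fin (p-1), Q q = Sum.inr (Sum.inr m) ∧ m.val ≠ i.val) := by
    intro q
    rcases hq : Q q with m | m | m
    · have h1 := hVQ q; have h2 := hWQ q
      rw [hq, adj_yx] at h1 h2
      exact absurd (Fin.ext (h1.1.symm.trans h2.1) : a = b) hab
    · have h1 := hUQ q
      rw [hq, adj_xy] at h1
      have hmi : m = i := Fin.ext h1.1.symm
      subst hmi
      exact Or.inl ⟨rfl, h1.2⟩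
    · have h1 := hUQ q
      rw [hq, adj_xz] at h1
      exact Or.inr ⟨m, rfl, fun hm => h1 hm.symm⟩
  have hlt : ∀ q, N (Q q) < p - 1 := by
    intro q
    rcases hshape q with ⟨h, hl⟩ | ⟨m, h, _⟩ <;> rw [h]
    · simpa using by omega
    · simpa using m.isLt
  have hinj : Function.Injective (fun q => (⟨N (Q q), hlt q⟩ : Fin (p-1))) := by
    intro q q' h
    simp only [Fin.mk.injEq] at h
    apply injQ
    rcases hshape q with ⟨h1, _⟩ | ⟨m, h1, hm⟩ <;> rcases hshape q' with ⟨h2, _⟩ | ⟨m', h2, hm'⟩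
    · rw [h1, h2]
    · rw [h1, h2] at h; simp at h; exact absurd h.symm hm'
    · rw [h1, h2] at h; simp at h; exact absurd h hm
    · rw [h1, h2] at h ⊢; simp at h; rw [Fin.ext h]
  have := Fintype.card_le_of_injective _ hinj
  simp only [Fintype.card_fin] at this
  omega

lemma blockYZ (hp : 1 ≤ p) (i a : Fin ω) (c : Fin (p-1)) (hac : a.val ≠ c.val)
    (Q : Fin p → V p ω)
    (hUQ : ∀ q, (G' p ω).Adj (Sum.inl i) (Q q))
    (hVQ : ∀ q, (G' p ω).Adj (Sum.inr (Sum.inl a)) (Q q))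
    (hWQ : ∀ q, (G' p ω).Adj (Sum.inr (Sum.inr c)) (Q q))
    (hic : i.val = c.val)
    (injQ : Function.Injective Q) : False := by
  have hshape : ∀ q, (∃ m : Fin ω, Q q = Sum.inl m ∧ m.val = a.val ∧ a.val + 1 < p) ∨
      (∃ m : Fin (p-1), Q q = Sum.inr (Sum.inr m) ∧ m.val ≠ a.val) := by
    intro q
    rcases hq : Q q with m | m | m
    · have h1 := hVQ q
      rw [hq, adj_yx] at h1
      exact Or.inl ⟨m, rfl, h1.1, by omega⟩
    · have h1 := hUQ q; have h2 := hWQ q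
      rw [hq, adj_xy] at h1
      rw [hq, adj_zy] at h2
      exact absurd (h1.1.symm.trans hic) h2
    · have h1 := hVQ q
      rw [hq, adj_yz] at h1
      exact Or.inr ⟨m, rfl, fun hm => h1 hm.symm⟩
  have hlt : ∀ q, N (Q q) < p - 1 := by
    intro q
    rcases hshape q with ⟨m, h, hm, hl⟩ | ⟨m, h, _⟩ <;> rw [h]
    · simpa using by omega
    · simpa using m.isLt
  have hinj : Function.Injective (fun q => (⟨N (Q q), hlt q⟩ : Fin (p-1))) := by
    intro q q' h
    simp only [Fin.mk.injEq] at h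
    apply injQ
    rcases hshape q with ⟨m, h1, hm, _⟩ | ⟨m, h1, hm⟩ <;>
      rcases hshape q' with ⟨m', h2, hm', _⟩ | ⟨m', h2, hm'⟩
    · rw [h1, h2] at h ⊢; simp at h; rw [Fin.ext h]
    · rw [h1, h2] at h; simp at h; exact absurd (h.symm.trans hm) hm'
    · rw [h1, h2] at h; simp at h; exact absurd (h.trans hm') hm
    · rw [h1, h2] at h ⊢; simp at h; rw [Fin.ext h]
  have := Fintype.card_le_of_injective _ hinj
  simp only [Fintype.card_fin] at this
  omega

lemma blockZ (hp : 1 ≤ p) (k : Fin (p-1)) (v w : Fin ω)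
    (hv : v.val = k.val) (hw : w.val = k.val) (Q : Fin p → V p ω)
    (hUQ : ∀ q, (G' p ω).Adj (Sum.inr (Sum.inr k)) (Q q))
    (hVQ : ∀ q, (G' p ω).Adj (Sum.inl v) (Q q))
    (hWQ : ∀ q, (G' p ω).Adj (Sum.inr (Sum.inl w)) (Q q))
    (hvne : ∀ q, Q q ≠ Sum.inl v)
    (hwne : ∀ q, Q q ≠ Sum.inr (Sum.inl w))
    (injQ : Function.Injective Q) : False := by
  have hshape : ∀ q, ∃ m : Fin (p-1), Q q = Sum.inr (Sum.inr m) := by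
    intro q
    rcases hq : Q q with m | m | m
    · have h1 := hWQ q
      rw [hq, adj_yx] at h1
      have hm : m = v := Fin.ext (h1.1.trans (hw.trans hv.symm))
      rw [hm] at hq
      exact absurd hq (hvne q)
    · have h1 := hVQ q
      rw [hq, adj_xy] at h1
      have hm : m = w := Fin.ext (h1.1.symm.trans (hv.trans hw.symm))
      rw [hm] at hq
      exact absurd hq (hwne q)
    · exact ⟨m, rfl⟩
  have hlt : ∀ q, N (Q q) < p - 1 := by
    intro q
    obtain ⟨m, h⟩ := hshape q
    rw [h]; simpa using m.isLt
  have hinj : Function.Injective (fun q => (⟨N (Q q), hlt q⟩ : Fin (p-1))) := by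
    intro q q' h
    simp only [Fin.mk.injEq] at h
    apply injQ
    obtain ⟨m, h1⟩ := hshape q
    obtain ⟨m', h2⟩ := hshape q'
    rw [h1, h2] at h ⊢; simp at h; rw [Fin.ext h]
  have := Fintype.card_le_of_injective _ hinj
  simp only [Fintype.card_fin] at this
  omega

end Stmt7Aux
namespace Stmt7Aux
open SimpleGraph
variable {p ω : ℕ}

lemma sf_inj : Function.Injective (σf : V p ω → V p ω) :=
  Function.LeftInverse.injective σf_invol

lemma adj_sf {a b : V p ω} : (G' p ω).Adj (σf a) (σf b) ↔ (G' p ω).Adj a b :=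
  σ.map_rel_iff'

lemma mainX (hp : 1 ≤ p) (i : Fin ω) (A B : V p ω) (Q : Fin p → V p ω)
    (hneUV : Sum.inl i ≠ A) (hneUW : Sum.inl i ≠ B)
    (hUV : ¬ (G' p ω).Adj (Sum.inl i) A) (hUW : ¬ (G' p ω).Adj (Sum.inl i) B)
    (hVW : (G' p ω).Adj A B)
    (hUQ : ∀ q, (G' p ω).Adj (Sum.inl i) (Q q))
    (hVQ : ∀ q, (G' p ω).Adj A (Q q))
    (hWQ : ∀ q, (G' p ω).Adj B (Q q))
    (injQ : Function.Injective Q) : False := by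
  rcases A with a | a | c
  · simp only [adj_xx, ne_eq, not_not] at hUV
    exact hneUV (by rw [hUV])
  · rcases B with b | b | c'
    · simp only [adj_xx, ne_eq, not_not] at hUW
      exact hneUW (by rw [hUW])
    · rw [adj_yy] at hVW
      exact blockYY hp i a b hVW Q hUQ hVQ hWQ injQ
    · simp only [adj_xz, ne_eq, not_not] at hUW
      rw [adj_yz] at hVW
      exact blockYZ hp i a c' hVW Q hUQ hVQ hWQ hUW injQ
  · rcases B with b | b | c'
    · simp only [adj_xx, ne_eq, not_not] at hUW
      exact hneUW (by rw [hUW])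
    · simp only [adj_xz, ne_eq, not_not] at hUV
      rw [adj_zy] at hVW
      exact blockYZ hp i b c hVW Q hUQ hWQ hVQ hUV injQ
    · simp only [adj_xz, ne_eq, not_not] at hUV hUW
      have : c = c' := Fin.ext (hUV.symm.trans hUW)
      subst this
      rw [adj_zz] at hVW
      exact hVW rfl

lemma mainZ (hp : 1 ≤ p) (k : Fin (p-1)) (A B : V p ω) (Q : Fin p → V p ω)
    (hneUV : Sum.inr (Sum.inr k) ≠ A) (hneUW : Sum.inr (Sum.inr k) ≠ B)
    (hUV : ¬ (G' p ω).Adj (Sum.inr (Sum.inr k)) A)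
    (hUW : ¬ (G' p ω).Adj (Sum.inr (Sum.inr k)) B)
    (hVW : (G' p ω).Adj A B)
    (hUQ : ∀ q, (G' p ω).Adj (Sum.inr (Sum.inr k)) (Q q))
    (hVQ : ∀ q, (G' p ω).Adj A (Q q))
    (hWQ : ∀ q, (G' p ω).Adj B (Q q))
    (hVne : ∀ q, Q q ≠ A) (hWne : ∀ q, Q q ≠ B)
    (injQ : Function.Injective Q) : False := by
  rcases A with v | v | c
  · simp only [adj_zx, ne_eq, not_not] at hUV
    rcases B with w | w | c'
    · simp only [adj_zx, ne_eq, not_not] at hUW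
      have : v = w := Fin.ext (hUV.trans hUW.symm)
      subst this
      rw [adj_xx] at hVW
      exact hVW rfl
    · simp only [adj_zy, ne_eq, not_not] at hUW
      exact blockZ hp k v w hUV hUW Q hUQ hVQ hWQ hVne hWne injQ
    · simp only [adj_zz, ne_eq, not_not] at hUW
      exact hneUW (by rw [hUW])
  · simp only [adj_zy, ne_eq, not_not] at hUV
    rcases B with w | w | c'
    · simp only [adj_zx, ne_eq, not_not] at hUW
      exact blockZ hp k w v hUW hUV Q hUQ hWQ hVQ hWne hVne injQ
    · simp only [adj_zy, ne_eq, not_not] at hUW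
      have : v = w := Fin.ext (hUV.trans hUW.symm)
      subst this
      rw [adj_yy] at hVW
      exact hVW rfl
    · simp only [adj_zz, ne_eq, not_not] at hUW
      exact hneUW (by rw [hUW])
  · simp only [adj_zz, ne_eq, not_not] at hUV
    exact hneUV (by rw [hUV])

lemma main (hp : 1 ≤ p) (U A B : V p ω) (Q : Fin p → V p ω)
    (hneUV : U ≠ A) (hneUW : U ≠ B)
    (hUV : ¬ (G' p ω).Adj U A) (hUW : ¬ (G' p ω).Adj U B)
    (hVW : (G' p ω).Adj A B)
    (hUQ : ∀ q, (G' p ω).Adj U (Q q))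
    (hVQ : ∀ q, (G' p ω).Adj A (Q q))
    (hWQ : ∀ q, (G' p ω).Adj B (Q q))
    (hVne : ∀ q, Q q ≠ A) (hWne : ∀ q, Q q ≠ B)
    (injQ : Function.Injective Q) : False := by
  rcases U with i | i | k
  · exact mainX hp i A B Q hneUV hneUW hUV hUW hVW hUQ hVQ hWQ injQ
  · refine mainX hp i (σf A) (σf B) (σf ∘ Q) ?_ ?_ ?_ ?_ ?_ ?_ ?_ ?_ (sf_inj.comp injQ)
    · exact fun h => hneUV (sf_inj (h : σf (Sum.inr (Sum.inl i)) = σf A))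
    · exact fun h => hneUW (sf_inj (h : σf (Sum.inr (Sum.inl i)) = σf B))
    · exact fun h => hUV (adj_sf.mp (h : (G' p ω).Adj (σf (Sum.inr (Sum.inl i))) (σf A)))
    · exact fun h => hUW (adj_sf.mp (h : (G' p ω).Adj (σf (Sum.inr (Sum.inl i))) (σf B)))
    · exact adj_sf.mpr hVW
    · exact fun q => adj_sf.mpr (hUQ q)
    · exact fun q => adj_sf.mpr (hVQ q)
    · exact fun q => adj_sf.mpr (hWQ q)
  · exact mainZ hp k A B Q hneUV hneUW hUV hUW hVW hUQ hVQ hWQ hVne hWne injQ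

end Stmt7Aux

namespace Stmt7Aux
open SimpleGraph
variable {p ω : ℕ}

lemma isNClique_comap {α β : Type*} {G : SimpleGraph β} (e : α ≃ β) {n : ℕ} {s : Finset β}
    (h : G.IsNClique n s) : (G.comap e.toEmbedding).IsNClique n (s.map e.symm.toEmbedding) := by
  constructor
  · intro a ha b hb hne
    simp only [Finset.coe_map, Set.mem_image, Finset.mem_coe, Equiv.coe_toEmbedding] at ha hb
    obtain ⟨x, hx, rfl⟩ := ha
    obtain ⟨y, hy, rfl⟩ := hb
    have hxy : x ≠ y := fun hh => hne (by rw [hh])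
    have := h.1 (Finset.mem_coe.mpr hx) (Finset.mem_coe.mpr hy) hxy
    simpa [comap_adj] using this
  · rw [Finset.card_map]
    exact h.2

lemma freeK (hp : 1 ≤ p) : _root_.Free (K1K2Kp p) (G' p ω) := by
  rintro ⟨f⟩
  have fmr : ∀ {a b}, (G' p ω).Adj (f a) (f b) ↔ (K1K2Kp p).Adj a b := fun {a b} =>
    f.map_rel_iff'
  have finj : Function.Injective f := f.injective
  have nuv : ¬ (K1K2Kp p).Adj (Sum.inl (Sum.inl 0)) (Sum.inl (Sum.inr 0)) := by
    simp [K1K2Kp, joinG, K1K2, fromRel_adj]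
  have nuw : ¬ (K1K2Kp p).Adj (Sum.inl (Sum.inl 0)) (Sum.inl (Sum.inr 1)) := by
    simp [K1K2Kp, joinG, K1K2, fromRel_adj]
  have avw : (K1K2Kp p).Adj (Sum.inl (Sum.inr 0)) (Sum.inl (Sum.inr 1)) := by
    simp [K1K2Kp, joinG, K1K2, fromRel_adj]
  have axq : ∀ (x : Fin 1 ⊕ Fin 2) (q : Fin p), (K1K2Kp p).Adj (Sum.inl x) (Sum.inr q) := by
    intro x q
    simp [K1K2Kp, joinG, fromRel_adj]
  refine main hp (f (Sum.inl (Sum.inl 0))) (f (Sum.inl (Sum.inr 0))) (f (Sum.inl (Sum.inr 1)))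
    (fun q => f (Sum.inr q)) ?_ ?_ ?_ ?_ ?_ ?_ ?_ ?_ ?_ ?_ ?_
  · exact fun h => absurd (finj h) (by simp)
  · exact fun h => absurd (finj h) (by simp)
  · exact fun h => nuv (fmr.mp h)
  · exact fun h => nuw (fmr.mp h)
  · exact fmr.mpr avw
  · exact fun q => fmr.mpr (axq _ q)
  · exact fun q => fmr.mpr (axq _ q)
  · exact fun q => fmr.mpr (axq _ q)
  · exact fun q h => absurd (finj h) (by simp)
  · exact fun q h => absurd (finj h) (by simp)
  · exact fun q q' h => by simpa using finj h

lemma freeP (hp : 1 ≤ p) : _root_.Free P3P2 (G' p ω) := by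
  rintro ⟨f⟩
  have fmr : ∀ {a b}, (G' p ω).Adj (f a) (f b) ↔ P3P2.Adj a b := fun {a b} =>
    f.map_rel_iff'
  have finj : Function.Injective f := f.injective
  have n1 : ¬ P3P2.Adj (Sum.inl 0) (Sum.inl 2) := by
    simp [P3P2, pathGraph_adj]
  have n2 : ¬ P3P2.Adj (Sum.inl 0) (Sum.inr 0) := by
    simp [P3P2]
  have n3 : ¬ P3P2.Adj (Sum.inl 2) (Sum.inr 0) := by
    simp [P3P2]
  exact no_indep_three hp
    (a := f (Sum.inl 0)) (b := f (Sum.inl 2)) (c := f (Sum.inr 0))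
    (fun h => absurd (finj h) (by simp))
    (fun h => absurd (finj h) (by simp))
    (fun h => absurd (finj h) (by simp))
    (fun h => n1 (fmr.mp h)) (fun h => n2 (fmr.mp h)) (fun h => n3 (fmr.mp h))

lemma compl_cliqueFree3 (hp : 1 ≤ p) : ((G' p ω)ᶜ).CliqueFree 3 := by
  intro s hs
  obtain ⟨a, b, c, hab, hac, hbc, rfl⟩ := Finset.card_eq_three.mp hs.2
  have h1 := hs.1 (by simp) (by simp : b ∈ _) hab
  have h2 := hs.1 (by simp) (by simp : c ∈ _) hac
  have h3 := hs.1 (by simp : b ∈ _) (by simp : c ∈ _) hbc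
  rw [compl_adj] at h1 h2 h3
  exact no_indep_three hp hab hac hbc h1.2 h2.2 h3.2

lemma compl_pair (hp : 1 ≤ p) (hω : p + 1 ≤ ω) :
    ((G' p ω)ᶜ).IsNClique 2
      ({Sum.inl ⟨0, by omega⟩, Sum.inr (Sum.inl ⟨ω - 1, by omega⟩)} : Finset (V p ω)) := by
  have hkey : ((G' p ω)ᶜ).Adj (Sum.inl (⟨0, by omega⟩ : Fin ω))
      (Sum.inr (Sum.inl (⟨ω - 1, by omega⟩ : Fin ω))) := by
    rw [compl_adj]
    refine ⟨by simp, ?_⟩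
    rw [adj_xy]
    simp only
    omega
  constructor
  · intro u hu v hv hne
    simp only [Finset.coe_insert, Set.mem_insert_iff, Finset.coe_singleton,
      Set.mem_singleton_iff] at hu hv
    rcases hu with rfl | rfl <;> rcases hv with rfl | rfl
    · exact absurd rfl hne
    · exact hkey
    · exact hkey.symm
    · exact absurd rfl hne
  · rw [Finset.card_insert_of_notMem (by simp), Finset.card_singleton]

lemma color_bound (hp : 1 ≤ p) {n : ℕ} (h : (G' p ω).Colorable n) : 2 * ω + p - 1 ≤ 2 * n := by
  classical
  obtain ⟨C⟩ := h
  have h1 : (Finset.univ : Finset (V p ω)).card =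
      ∑ k : Fin n, (Finset.univ.filter (fun a => C a = k)).card :=
    Finset.card_eq_sum_card_fiberwise (fun a _ => Finset.mem_univ (C a))
  have h2 : ∀ k : Fin n, (Finset.univ.filter (fun a => C a = k)).card ≤ 2 := by
    intro k
    by_contra hgt
    push_neg at hgt
    obtain ⟨a, b, c, ha, hb, hc, hab, hac, hbc⟩ := Finset.two_lt_card_iff.mp hgt
    simp only [Finset.mem_filter] at ha hb hc
    exact no_indep_three hp hab hac hbc
      (fun h => C.valid h (ha.2.trans hb.2.symm))
      (fun h => C.valid h (ha.2.trans hc.2.symm))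
      (fun h => C.valid h (hb.2.trans hc.2.symm))
  have h3 : (Finset.univ : Finset (V p ω)).card = ω + (ω + (p - 1)) := by
    simp [V]
  have h4 : ∑ k : Fin n, (Finset.univ.filter (fun a => C a = k)).card ≤
      ∑ _k : Fin n, 2 := Finset.sum_le_sum (fun k _ => h2 k)
  simp only [Finset.sum_const, Finset.card_univ, Fintype.card_fin, smul_eq_mul] at h4
  omega

end Stmt7Aux

theorem stmt_7 (p ω : ℕ) (hp : 1 ≤ p) (hω : p + 1 ≤ ω) :
    ∃ G : SimpleGraph (Fin (2 * ω + p - 1)),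
      _root_.Free P3P2 G ∧ _root_.Free (K1K2Kp p) G ∧ G.cliqueNum = ω ∧ Gᶜ.cliqueNum = 2 ∧
      (↑(ω + (p - 1 + 1) / 2) : ℕ∞) ≤ G.chromaticNumber := by
  have hn : 2 * ω + p - 1 = ω + (ω + (p - 1)) := by omega
  let e : Fin (2 * ω + p - 1) ≃ Stmt7Aux.V p ω :=
    (finCongr hn).trans (finSumFinEquiv.symm.trans
      ((Equiv.refl (Fin ω)).sumCongr finSumFinEquiv.symm))
  set Gg : SimpleGraph (Fin (2 * ω + p - 1)) := (Stmt7Aux.G' p ω).comap e.toEmbedding with hGg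
  have φ : Gg ≃g Stmt7Aux.G' p ω := SimpleGraph.Iso.comap e (Stmt7Aux.G' p ω)
  refine ⟨Gg, ?_, ?_, ?_, ?_, ?_⟩
  · rintro ⟨g⟩
    exact Stmt7Aux.freeP hp ⟨φ.toEmbedding.comp g⟩
  · rintro ⟨g⟩
    exact Stmt7Aux.freeK hp ⟨φ.toEmbedding.comp g⟩
  · refine Stmt7Aux.cliqueNum_eq_of (Stmt7Aux.isNClique_comap e (Stmt7Aux.xclique hp hω)) ?_
    exact (Stmt7Aux.cliqueFree hp hω).comap φ.toEmbedding.isContained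
  · have hc : Ggᶜ = (Stmt7Aux.G' p ω)ᶜ.comap e.toEmbedding := by
      ext a b
      simp only [compl_adj, comap_adj, Equiv.coe_toEmbedding, hGg, ne_eq,
        EmbeddingLike.apply_eq_iff_eq]
    have φc : Ggᶜ ≃g (Stmt7Aux.G' p ω)ᶜ := hc ▸ SimpleGraph.Iso.comap e ((Stmt7Aux.G' p ω)ᶜ)
    rw [hc]
    refine Stmt7Aux.cliqueNum_eq_of (Stmt7Aux.isNClique_comap e (Stmt7Aux.compl_pair hp hω)) ?_
    exact (Stmt7Aux.compl_cliqueFree3 hp).comap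
      (SimpleGraph.Iso.comap e ((Stmt7Aux.G' p ω)ᶜ)).toEmbedding.isContained
  · have hcol := Gg.colorable_chromaticNumber_of_fintype
    have htrans : (Stmt7Aux.G' p ω).Colorable (ENat.toNat Gg.chromaticNumber) :=
      SimpleGraph.Colorable.of_hom φ.symm.toEmbedding.toHom hcol
    have hb := Stmt7Aux.color_bound hp htrans
    have hne : Gg.chromaticNumber ≠ ⊤ :=
      SimpleGraph.chromaticNumber_ne_top_iff_exists.mpr ⟨_, Gg.colorable_of_fintype⟩
    calc (↑(ω + (p - 1 + 1) / 2) : ℕ∞) ≤ ↑(ENat.toNat Gg.chromaticNumber) := by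
          exact_mod_cast (by omega : ω + (p - 1 + 1) / 2 ≤ ENat.toNat Gg.chromaticNumber)
      _ = Gg.chromaticNumber := ENat.coe_toNat hne
end

section
/- Let p ≥ 2 and let G be a {P3 ∪ P2, 2K1 + Kp}-free graph with ω(G) ≥ 3p−1 and maximum clique A. Then for every k, the set I_k (vertices outside A adjacent to all of A except v_k) is empty; consequently every vertex outside A is nonadjacent to at least two vertices of A. -/
open SimpleGraph

/-- `G` is `H`-free if it has no induced subgraph isomorphic to `H`,
i.e. there is no graph embedding of `H` into `G`. -/
def FreeInd {α β : Type*} (H : SimpleGraph α) (G : SimpleGraph β) : Prop :=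
  ¬ Nonempty (H ↪g G)

lemma key_stmt_9 {V : Type*} [Fintype V] (G : SimpleGraph V) (p : ℕ) (hp : 2 ≤ p)
    (hf2 : FreeInd (twoK1Kp p) G)
    (hω : 3 * p - 1 ≤ G.cliqueNum)
    (v : Fin G.cliqueNum → V) (hinj : Function.Injective v)
    (hclique : G.IsClique (Set.range v)) (k : Fin G.cliqueNum) (x : V)
    (hx : x ∉ Set.range v) (hadj : ∀ i, i ≠ k → G.Adj x (v i)) : False := by
  classical
  have hωp : p + 1 ≤ G.cliqueNum := by omega
  have hxne : ∀ i, x ≠ v i := fun i h => hx ⟨i, h.symm⟩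
  by_cases hxk : G.Adj x (v k)
  · have hall : ∀ i, G.Adj x (v i) := by
      intro i
      by_cases h : i = k
      · exact h ▸ hxk
      · exact hadj i h
    have hc : G.IsClique ((insert x (Finset.image v Finset.univ) : Finset V) : Set V) := by
      rw [Finset.coe_insert, Finset.coe_image, Finset.coe_univ, Set.image_univ]
      apply hclique.insert
      rintro y ⟨i, rfl⟩ _
      exact hall i
    have hcard : (insert x (Finset.image v Finset.univ) : Finset V).card = G.cliqueNum + 1 := by
      rw [Finset.card_insert_of_notMem (by simpa using hx),
        Finset.card_image_of_injective _ hinj, Finset.card_univ, Fintype.card_fin]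
    have := SimpleGraph.IsClique.card_le_cliqueNum (G := G)
      (t := insert x (Finset.image v Finset.univ)) (tc := hc)
    omega
  · set f : Fin p → Fin G.cliqueNum := fun j =>
      if _ : (j : ℕ) < (k : ℕ) then ⟨j, by omega⟩ else ⟨(j : ℕ) + 1, by omega⟩ with hfdef
    have hfk : ∀ j, f j ≠ k := by
      intro j h
      rw [Fin.ext_iff] at h
      simp only [hfdef] at h
      split at h <;> simp only at h <;> omega
    have hfinj : Function.Injective f := by
      intro a b hab
      rw [Fin.ext_iff] at hab ⊢
      simp only [hfdef] at hab
      split at hab <;> split at hab <;> simp only at hab <;> omega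
    let φ : Fin 2 ⊕ Fin p → V := Sum.elim ![x, v k] (fun j => v (f j))
    have hφinj : Function.Injective φ := by
      rintro (a | a) (b | b) hab <;>
        simp only [φ, Sum.elim_inl, Sum.elim_inr] at hab
      · fin_cases a <;> fin_cases b <;>
          simp only [Matrix.cons_val_zero, Matrix.cons_val_one, Matrix.head_cons] at hab <;>
          first
            | rfl
            | exact absurd hab (hxne k)
            | exact absurd hab.symm (hxne k)
      · fin_cases a <;>
          simp only [Matrix.cons_val_zero, Matrix.cons_val_one, Matrix.head_cons] at hab
        · exact absurd hab (hxne _)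
        · exact absurd (hinj hab).symm (hfk b)
      · fin_cases b <;>
          simp only [Matrix.cons_val_zero, Matrix.cons_val_one, Matrix.head_cons] at hab
        · exact absurd hab.symm (hxne _)
        · exact absurd (hinj hab) (hfk a)
      · exact congrArg Sum.inr (hfinj (hinj hab))
    have hcliq : ∀ i j : Fin G.cliqueNum, i ≠ j → G.Adj (v i) (v j) := by
      intro i j hij
      exact hclique ⟨i, rfl⟩ ⟨j, rfl⟩ (fun h => hij (hinj h))
    have hmap : ∀ a b, G.Adj (φ a) (φ b) ↔ (twoK1Kp p).Adj a b := by
      rintro (a | a) (b | b) <;>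
        simp only [φ, Sum.elim_inl, Sum.elim_inr, twoK1Kp, joinG, fromRel_adj]
      · constructor
        · intro h
          exfalso
          fin_cases a <;> fin_cases b <;>
            simp only [Matrix.cons_val_zero, Matrix.cons_val_one, Matrix.head_cons] at h <;>
            first
              | exact G.loopless.irrefl _ h
              | exact hxk h
              | exact hxk h.symm
        · rintro ⟨_, h | h⟩ <;> exact h.elim
      · constructor
        · intro _; exact ⟨Sum.inl_ne_inr, Or.inl trivial⟩
        · intro _
          fin_cases a <;>
            simp only [Matrix.cons_val_zero, Matrix.cons_val_one, Matrix.head_cons]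
          · exact hadj _ (hfk b)
          · exact hcliq k (f b) (Ne.symm (hfk b))
      · constructor
        · intro _; exact ⟨Sum.inr_ne_inl, Or.inr trivial⟩
        · intro _
          fin_cases b <;>
            simp only [Matrix.cons_val_zero, Matrix.cons_val_one, Matrix.head_cons]
          · exact (hadj _ (hfk a)).symm
          · exact hcliq (f a) k (hfk a)
      · constructor
        · intro h
          refine ⟨fun hc => ?_, Or.inl ?_⟩
          · exact G.loopless.irrefl _ (by cases hc; exact h)
          · simp only [top_adj]
            intro hc; exact G.loopless.irrefl _ (hc ▸ h)
        · rintro ⟨hne, h | h⟩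
          · simp only [top_adj] at h
            exact hcliq _ _ (fun hc => h (hfinj hc))
          · simp only [top_adj] at h
            exact hcliq _ _ (fun hc => h (hfinj hc.symm))
    exact hf2 ⟨⟨⟨φ, hφinj⟩, fun {a b} => hmap a b⟩⟩


theorem stmt_9 {V : Type*} [Fintype V] (G : SimpleGraph V) (p : ℕ) (hp : 2 ≤ p)
    (hf1 : FreeInd P3P2 G) (hf2 : FreeInd (twoK1Kp p) G)
    (hω : 3 * p - 1 ≤ G.cliqueNum)
    (v : Fin G.cliqueNum → V) (hinj : Function.Injective v)
    (hclique : G.IsClique (Set.range v)) :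
    (∀ k : Fin G.cliqueNum,
        {x | x ∉ Set.range v ∧ ∀ i, i ≠ k → G.Adj x (v i)} = ∅) ∧
    (∀ x, x ∉ Set.range v →
        ∃ i j : Fin G.cliqueNum, i ≠ j ∧ ¬ G.Adj x (v i) ∧ ¬ G.Adj x (v j)) := by
  have key := key_stmt_9 G p hp hf2 hω v hinj hclique
  constructor
  · intro k
    ext y
    simp only [Set.mem_setOf_eq, Set.mem_empty_iff_false, iff_false, not_and]
    intro hy hadj
    exact key k y hy hadj
  · intro x hx
    have hpos : 0 < G.cliqueNum := by omega
    have key' : ∀ k : Fin G.cliqueNum, ∃ i, i ≠ k ∧ ¬ G.Adj x (v i) := by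
      intro k
      by_contra h
      push_neg at h
      exact key k x hx h
    obtain ⟨i, -, hi⟩ := key' ⟨0, hpos⟩
    obtain ⟨j, hji, hj⟩ := key' i
    exact ⟨i, j, fun h => hji h.symm, hi, hj⟩
end

section
/- Let p ≥ 2 and let G be a {P3 ∪ P2, 2K1 + Kp}-free graph with ω(G) ≥ 3p−1. Then G is perfect; in particular χ(G) = ω(G). -/
open SimpleGraph

open Finset

lemma hall_color {W : Type*} [Fintype W] (H : SimpleGraph W) (Q : Finset W)
    (hQ : H.IsClique (Q : Set W))
    (hP3 : ∀ u v w : W, u ∉ Q → v ∉ Q → w ∉ Q →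
      H.Adj u v → H.Adj v w → u ≠ w → H.Adj u w) :
    H.chromaticNumber = (H.cliqueNum : ℕ∞) := by
  classical
  -- lower bound
  obtain ⟨K, hK⟩ := H.exists_isNClique_cliqueNum
  have hlow : (H.cliqueNum : ℕ∞) ≤ H.chromaticNumber := by
    have := hK.1.card_le_chromaticNumber
    rwa [hK.2] at this
  refine le_antisymm ?_ hlow
  -- upper bound: construct a coloring with `cliqueNum` colors
  cases isEmpty_or_nonempty W with
  | inl hE =>
    rw [H.chromaticNumber_eq_zero_of_isEmpty]
    exact zero_le
  | inr hNE =>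
    set k := H.cliqueNum with hk
    have hk1 : 1 ≤ k := by
      obtain ⟨w⟩ := hNE
      have hclq : H.IsClique ({w} : Finset W) := by simp
      have := IsClique.card_le_cliqueNum (tc := hclq)
      simpa using this
    have hQcard : #Q ≤ k := IsClique.card_le_cliqueNum (tc := hQ)
    -- injective coloring of Q
    set eQ : Q ≃ Fin #Q := Q.equivFin with heQ
    set colorQ : W → Fin k := fun w =>
      if h : w ∈ Q then Fin.castLE hQcard (eQ ⟨w, h⟩) else ⟨0, hk1⟩ with hcolorQ
    have hQinj : ∀ x ∈ Q, ∀ y ∈ Q, colorQ x = colorQ y → x = y := by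
      intro x hx y hy hxy
      rw [hcolorQ] at hxy
      simp only [dif_pos hx, dif_pos hy] at hxy
      have : eQ ⟨x, hx⟩ = eQ ⟨y, hy⟩ := by
        apply Fin.castLE_injective hQcard hxy
      have := eQ.injective this
      exact congrArg Subtype.val this
    set allowed : W → Finset (Fin k) := fun v =>
      Finset.univ \ (Q.filter (fun x => H.Adj v x)).image colorQ with hallowed
    set comp : W → Finset W := fun v =>
      Finset.univ.filter (fun u => u ∉ Q ∧ (u = v ∨ H.Adj u v)) with hcomp
    have hmemcomp : ∀ v, v ∉ Q → v ∈ comp v := by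
      intro v hv; simp [hcomp, hv]
    have hcompadj : ∀ v, v ∉ Q → ∀ a ∈ comp v, ∀ b ∈ comp v, a ≠ b → H.Adj a b := by
      intro v hv a ha b hb hab
      simp only [hcomp, mem_filter, mem_univ, true_and] at ha hb
      rcases ha.2 with rfl | hav
      · rcases hb.2 with rfl | hbv
        · exact absurd rfl hab
        · exact hbv.symm
      · rcases hb.2 with rfl | hbv
        · exact hav
        · exact hP3 a v b ha.1 hv hb.1 hav hbv.symm hab
    have hcompeq : ∀ u v, u ∉ Q → v ∉ Q → H.Adj u v → comp u = comp v := by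
      have key : ∀ u v, u ∉ Q → v ∉ Q → H.Adj u v → comp u ⊆ comp v := by
        intro u v hu hv huv z hz
        simp only [hcomp, mem_filter, mem_univ, true_and] at hz ⊢
        refine ⟨hz.1, ?_⟩
        rcases hz.2 with rfl | hzu
        · exact Or.inr huv
        · by_cases hzv : z = v
          · exact Or.inl hzv
          · exact Or.inr (hP3 z u v hz.1 hu hv hzu huv hzv)
      intro u v hu hv huv
      exact le_antisymm (key u v hu hv huv) (key v u hv hu huv.symm)
    -- the property we get from Hall's theorem
    set P : Finset W → Prop := fun C =>
      ∃ f : W → Fin k, Set.InjOn f (C : Set W) ∧ ∀ u ∈ C, f u ∈ allowed u with hP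
    have hallAll : ∀ v, v ∉ Q → P (comp v) := by
      intro v hv
      have cond : ∀ s' : Finset {u // u ∈ comp v},
          #s' ≤ #(s'.biUnion (fun u => allowed ↑u)) := by
        intro s'
        rcases s'.eq_empty_or_nonempty with rfl | ⟨u0, hu0⟩
        · simp
        set S : Finset W := s'.image Subtype.val with hSdef
        have hScard : #S = #s' := card_image_of_injective _ Subtype.val_injective
        set B : Finset (Fin k) := s'.biUnion (fun u => allowed ↑u) with hB
        set W0 : Finset W := Q.filter (fun x => ∀ u ∈ S, H.Adj u x) with hW0
        have hScomp : ∀ a ∈ S, a ∈ comp v := by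
          intro a ha
          obtain ⟨u, _, rfl⟩ := mem_image.mp ha
          exact u.2
        have hsub : Finset.univ \ B ⊆ W0.image colorQ := by
          intro c hc
          have hcmem : ∀ u : {u // u ∈ comp v}, u ∈ s' →
              ∃ x, x ∈ Q ∧ H.Adj ↑u x ∧ colorQ x = c := by
            intro u hu
            have h1 : c ∉ allowed ↑u := fun hc' =>
              (mem_sdiff.mp hc).2 (mem_biUnion.mpr ⟨u, hu, hc'⟩)
            have h2 : c ∈ (Q.filter (fun x => H.Adj (↑u) x)).image colorQ := by
              by_contra h'
              exact h1 (mem_sdiff.mpr ⟨mem_univ _, h'⟩)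
            obtain ⟨x, hx, hcx⟩ := mem_image.mp h2
            exact ⟨x, (mem_filter.mp hx).1, (mem_filter.mp hx).2, hcx⟩
          obtain ⟨x0, hx0Q, hx0adj, hx0c⟩ := hcmem u0 hu0
          refine mem_image.mpr ⟨x0, ?_, hx0c⟩
          refine mem_filter.mpr ⟨hx0Q, ?_⟩
          intro w hw
          obtain ⟨u, hu, rfl⟩ := mem_image.mp hw
          obtain ⟨x1, hx1Q, hx1adj, hx1c⟩ := hcmem u hu
          have : x1 = x0 := hQinj x1 hx1Q x0 hx0Q (hx1c.trans hx0c.symm)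
          rwa [← this]
        have hdisj : Disjoint S W0 := by
          rw [Finset.disjoint_left]
          intro a haS haW
          have := hScomp a haS
          simp only [hcomp, mem_filter, mem_univ, true_and] at this
          exact this.1 (mem_filter.mp haW).1
        have hclq : H.IsClique ((S ∪ W0 : Finset W) : Set W) := by
          intro a ha b hb hab
          rw [coe_union, Set.mem_union] at ha hb
          simp only [mem_coe] at ha hb
          rcases ha with haS | haW
          · rcases hb with hbS | hbW
            · exact hcompadj v hv a (hScomp a haS) b (hScomp b hbS) hab
            · exact (mem_filter.mp hbW).2 a haS
          · rcases hb with hbS | hbW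
            · exact ((mem_filter.mp haW).2 b hbS).symm
            · exact hQ (mem_coe.mpr (mem_filter.mp haW).1)
                (mem_coe.mpr (mem_filter.mp hbW).1) hab
        have hcard1 : #S + #W0 ≤ k := by
          have := IsClique.card_le_cliqueNum (tc := hclq)
          rwa [card_union_of_disjoint hdisj] at this
        have hcard2 : #(Finset.univ \ B) + #B = k := by
          have := card_sdiff_add_card_eq_card (subset_univ B)
          simpa using this
        have hcard3 : #(Finset.univ \ B) ≤ #W0 :=
          (card_le_card hsub).trans card_image_le
        omega
      obtain ⟨f, hfinj, hfmem⟩ :=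
        (Finset.all_card_le_biUnion_card_iff_exists_injective
          (fun u : {u // u ∈ comp v} => allowed ↑u)).mp cond
      refine ⟨fun w => if h : w ∈ comp v then f ⟨w, h⟩ else ⟨0, hk1⟩, ?_, ?_⟩
      · intro a ha b hb hab
        rw [mem_coe] at ha hb
        simp only [dif_pos ha, dif_pos hb] at hab
        exact congrArg Subtype.val (hfinj hab)
      · intro u hu
        simp only [dif_pos hu]
        exact hfmem ⟨u, hu⟩
    -- globalize via choice
    set F : Finset W → W → Fin k := fun C =>
      if h : P C then h.choose else fun _ => ⟨0, hk1⟩ with hF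
    have hFspec : ∀ C, P C →
        Set.InjOn (F C) (C : Set W) ∧ ∀ u ∈ C, F C u ∈ allowed u := by
      intro C h
      simp only [hF, dif_pos h]
      exact h.choose_spec
    set col : W → Fin k := fun w => if w ∈ Q then colorQ w else F (comp w) w with hcol
    have valid : ∀ {a b : W}, H.Adj a b → col a ≠ col b := by
      intro a b hab
      rw [hcol]
      by_cases haQ : a ∈ Q <;> by_cases hbQ : b ∈ Q
      · simp only [if_pos haQ, if_pos hbQ]
        intro h
        exact hab.ne (hQinj a haQ b hbQ h)
      · simp only [if_pos haQ, if_neg hbQ]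
        intro h
        have hb1 := (hFspec (comp b) (hallAll b hbQ)).2 b (hmemcomp b hbQ)
        rw [← h] at hb1
        rw [hallowed] at hb1
        simp only [mem_sdiff, mem_univ, true_and] at hb1
        exact hb1 (mem_image.mpr ⟨a, mem_filter.mpr ⟨haQ, hab.symm⟩, rfl⟩)
      · simp only [if_neg haQ, if_pos hbQ]
        intro h
        have ha1 := (hFspec (comp a) (hallAll a haQ)).2 a (hmemcomp a haQ)
        rw [h] at ha1
        rw [hallowed] at ha1
        simp only [mem_sdiff, mem_univ, true_and] at ha1
        exact ha1 (mem_image.mpr ⟨b, mem_filter.mpr ⟨hbQ, hab⟩, rfl⟩)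
      · simp only [if_neg haQ, if_neg hbQ]
        have hce : comp a = comp b := hcompeq a b haQ hbQ hab
        rw [hce]
        intro h
        have hinj := (hFspec (comp b) (hallAll b hbQ)).1
        have hamem : a ∈ comp b := by
          simp [hcomp, haQ, hab]
        exact hab.ne (hinj (mem_coe.mpr hamem) (mem_coe.mpr (hmemcomp b hbQ)) h)
    have : H.Colorable k := ⟨Coloring.mk col valid⟩
    exact this.chromaticNumber_le

theorem stmt_10 {V : Type*} [Fintype V] (G : SimpleGraph V) (p : ℕ) (hp : 2 ≤ p)
    (hf1 : _root_.Free P3P2 G) (hf2 : _root_.Free (twoK1Kp p) G)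
    (hω : 3 * p - 1 ≤ G.cliqueNum) :
    (∀ s : Set V, (G.induce s).chromaticNumber = ((G.induce s).cliqueNum : ℕ∞)) ∧
    G.chromaticNumber = (G.cliqueNum : ℕ∞) := by
  classical
  obtain ⟨Q, hQ⟩ := G.exists_isNClique_cliqueNum
  have hq : 3 * p - 1 ≤ #Q := by rw [hQ.2]; exact hω
  have hq5 : 5 ≤ #Q := by omega
  -- every vertex outside Q has at most p-1 neighbours in Q
  have hsmall : ∀ v, v ∉ Q → #(Q.filter (fun x => G.Adj v x)) ≤ p - 1 := by
    intro v hv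
    by_contra hcon
    push_neg at hcon
    set B := Q.filter (fun x => G.Adj v x) with hB
    have hpB : p ≤ #B := by omega
    by_cases hA : ∃ a ∈ Q, ¬ G.Adj v a
    · obtain ⟨a, haQ, hva⟩ := hA
      obtain ⟨B', hB'sub, hB'card⟩ := Finset.exists_subset_card_eq hpB
      have hB'Q : B' ⊆ Q := hB'sub.trans (filter_subset _ _)
      have hB'adj : ∀ x ∈ B', G.Adj v x := fun x hx => (mem_filter.mp (hB'sub hx)).2
      have haB' : a ∉ B' := fun h => hva (hB'adj a h)
      have hav : ¬ G.Adj a v := fun h => hva h.symm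
      have hvne : v ≠ a := fun h => hv (h ▸ haQ)
      set e : Fin p ≃ B' := (Finset.equivFinOfCardEq hB'card).symm with he
      set f : Fin 2 ⊕ Fin p → V :=
        Sum.elim (fun i => ![v, a] i) (fun j => ↑(e j)) with hf
      have hinj : Function.Injective f := by
        rintro (i | i) (j | j) hij <;>
          simp only [hf, Sum.elim_inl, Sum.elim_inr] at hij
        · fin_cases i <;> fin_cases j <;> simp_all
        · exfalso
          fin_cases i <;> simp only [Fin.zero_eta, Fin.mk_one, Matrix.cons_val_zero, Matrix.cons_val_one,
            Matrix.head_cons] at hij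
          · exact hv (by rw [hij]; exact hB'Q (e j).2)
          · exact haB' (by rw [hij]; exact (e j).2)
        · exfalso
          fin_cases j <;> simp only [Fin.zero_eta, Fin.mk_one, Matrix.cons_val_zero, Matrix.cons_val_one,
            Matrix.head_cons] at hij
          · exact hv (by rw [← hij]; exact hB'Q (e i).2)
          · exact haB' (by rw [← hij]; exact (e i).2)
        · have : e i = e j := Subtype.val_injective hij
          rw [e.injective this]
      refine hf2 ⟨⟨⟨f, hinj⟩, ?_⟩⟩
      rintro (i | i) (j | j) <;>
        simp only [hf, Function.Embedding.coeFn_mk, Sum.elim_inl, Sum.elim_inr,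
          twoK1Kp, joinG, fromRel_adj, SimpleGraph.bot_adj, SimpleGraph.top_adj]
      · constructor
        · intro h
          exfalso
          fin_cases i <;> fin_cases j <;> simp_all
        · rintro ⟨-, h | h⟩ <;> exact absurd h not_false
      · constructor
        · intro _; exact ⟨Sum.inl_ne_inr, Or.inl trivial⟩
        · intro _
          fin_cases i <;>
            simp only [Fin.zero_eta, Fin.mk_one, Matrix.cons_val_zero, Matrix.cons_val_one, Matrix.head_cons]
          · exact hB'adj _ (e j).2
          · refine hQ.1 (mem_coe.mpr haQ) (mem_coe.mpr (hB'Q (e j).2)) ?_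
            intro h; exact haB' (h ▸ (e j).2)
      · constructor
        · intro _; exact ⟨Sum.inr_ne_inl, Or.inr trivial⟩
        · intro _
          fin_cases j <;>
            simp only [Fin.zero_eta, Fin.mk_one, Matrix.cons_val_zero, Matrix.cons_val_one, Matrix.head_cons]
          · exact (hB'adj _ (e i).2).symm
          · refine (hQ.1 (mem_coe.mpr haQ) (mem_coe.mpr (hB'Q (e i).2)) ?_).symm
            intro h; exact haB' (h ▸ (e i).2)
      · constructor
        · intro h
          have hij : i ≠ j := by
            intro hh; subst hh; exact G.irrefl h
          exact ⟨fun hh => hij (Sum.inr.inj hh), Or.inl hij⟩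
        · rintro ⟨hne, -⟩
          have hij : i ≠ j := fun h => hne (congrArg Sum.inr h)
          have : (e i : V) ≠ (e j : V) :=
            fun h => hij (e.injective (Subtype.val_injective h))
          exact hQ.1 (mem_coe.mpr (hB'Q (e i).2)) (mem_coe.mpr (hB'Q (e j).2)) this
    · push_neg at hA
      have hclq : G.IsClique (insert v Q : Finset V) := by
        rw [coe_insert]
        exact hQ.1.insert (fun b hb _ => hA b hb)
      have hcard : #(insert v Q) = #Q + 1 := card_insert_of_notMem hv
      have := SimpleGraph.IsClique.card_le_cliqueNum (tc := hclq)
      rw [hcard, hQ.2] at this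
      omega
  -- no induced P3 outside Q
  have hP3G : ∀ u v w : V, u ∉ Q → v ∉ Q → w ∉ Q →
      G.Adj u v → G.Adj v w → u ≠ w → G.Adj u w := by
    intro u v w hu hv hw huv hvw hneq
    by_contra hneguw
    set T := Q.filter (fun z => ¬ G.Adj u z ∧ ¬ G.Adj v z ∧ ¬ G.Adj w z) with hT
    set Au := Q.filter (fun z => G.Adj u z) with hAu
    set Av := Q.filter (fun z => G.Adj v z) with hAv
    set Aw := Q.filter (fun z => G.Adj w z) with hAw
    have hsub : Q ⊆ T ∪ (Au ∪ Av ∪ Aw) := by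
      intro z hz
      by_cases h1 : G.Adj u z
      · exact mem_union_right _ (mem_union_left _ (mem_union_left _ (mem_filter.mpr ⟨hz, h1⟩)))
      by_cases h2 : G.Adj v z
      · exact mem_union_right _ (mem_union_left _ (mem_union_right _ (mem_filter.mpr ⟨hz, h2⟩)))
      by_cases h3 : G.Adj w z
      · exact mem_union_right _ (mem_union_right _ (mem_filter.mpr ⟨hz, h3⟩))
      · exact mem_union_left _ (mem_filter.mpr ⟨hz, h1, h2, h3⟩)
    have h1 := hsmall u hu
    have h2 := hsmall v hv
    have h3 := hsmall w hw
    rw [← hAu] at h1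
    rw [← hAv] at h2
    rw [← hAw] at h3
    have hTcard : 1 < #T := by
      have c1 := card_le_card hsub
      have c2 := card_union_le T (Au ∪ Av ∪ Aw)
      have c3 := card_union_le (Au ∪ Av) Aw
      have c4 := card_union_le Au Av
      omega
    obtain ⟨x, hx, y, hy, hxy⟩ := Finset.one_lt_card.mp hTcard
    rw [hT, mem_filter] at hx hy
    have hxyG : G.Adj x y := hQ.1 (mem_coe.mpr hx.1) (mem_coe.mpr hy.1) hxy
    have hux : ¬ G.Adj u x := hx.2.1
    have hvx : ¬ G.Adj v x := hx.2.2.1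
    have hwx : ¬ G.Adj w x := hx.2.2.2
    have huy : ¬ G.Adj u y := hy.2.1
    have hvy : ¬ G.Adj v y := hy.2.2.1
    have hwy : ¬ G.Adj w y := hy.2.2.2
    have hxu : ¬ G.Adj x u := fun h => hux h.symm
    have hxv : ¬ G.Adj x v := fun h => hvx h.symm
    have hxw : ¬ G.Adj x w := fun h => hwx h.symm
    have hyu : ¬ G.Adj y u := fun h => huy h.symm
    have hyv : ¬ G.Adj y v := fun h => hvy h.symm
    have hyw : ¬ G.Adj y w := fun h => hwy h.symm
    have hnegwu : ¬ G.Adj w u := fun h => hneguw h.symm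
    have hne1 : u ≠ v := huv.ne
    have hne2 : v ≠ w := hvw.ne
    have hout : ∀ i : Fin 3, ![u, v, w] i ∉ Q := by
      intro i; fin_cases i <;> assumption
    have hin : ∀ j : Fin 2, ![x, y] j ∈ Q := by
      intro j; fin_cases j
      · exact hx.1
      · exact hy.1
    set f : Fin 3 ⊕ Fin 2 → V :=
      Sum.elim (fun i => ![u, v, w] i) (fun j => ![x, y] j) with hf
    have hinj : Function.Injective f := by
      rintro (i | i) (j | j) hij <;>
        simp only [hf, Sum.elim_inl, Sum.elim_inr] at hij
      · fin_cases i <;> fin_cases j <;> simp_all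
      · exact absurd (hij.symm ▸ hin j) (hout i)
      · exact absurd (hij ▸ hin i) (hout j)
      · fin_cases i <;> fin_cases j <;> simp_all
    refine hf1 ⟨⟨⟨f, hinj⟩, ?_⟩⟩
    rintro (i | i) (j | j) <;>
      fin_cases i <;> fin_cases j <;>
      simp [hf, P3P2, pathGraph_adj, huv, hvw, huv.symm, hvw.symm, hneguw, hnegwu,
        hux, hvx, hwx, huy, hvy, hwy, hxu, hxv, hxw, hyu, hyv, hyw, hxyG, hxyG.symm]
  -- apply the coloring lemma
  refine ⟨?_, hall_color G Q hQ.1 hP3G⟩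
  intro s
  haveI : Fintype ↥s := Set.Finite.fintype (Set.toFinite s)
  set Q' : Finset ↥s := Finset.univ.filter (fun a => (a : V) ∈ Q) with hQ'
  have hmem : ∀ a : ↥s, a ∈ Q' ↔ (a : V) ∈ Q := by intro a; simp [hQ']
  apply hall_color (G.induce s) Q'
  · intro a ha b hb hab
    have ha' : (a : V) ∈ Q := (hmem a).mp (mem_coe.mp ha)
    have hb' : (b : V) ∈ Q := (hmem b).mp (mem_coe.mp hb)
    have hne : (a : V) ≠ (b : V) := fun h => hab (Subtype.val_injective h)
    exact hQ.1 (mem_coe.mpr ha') (mem_coe.mpr hb') hne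
  · intro u v w hu hv hw huv hvw hneq
    have hu' : (u : V) ∉ Q := fun h => hu ((hmem u).mpr h)
    have hv' : (v : V) ∉ Q := fun h => hv ((hmem v).mpr h)
    have hw' : (w : V) ∉ Q := fun h => hw ((hmem w).mpr h)
    have hneq' : (u : V) ≠ (w : V) := fun h => hneq (Subtype.val_injective h)
    exact hP3G u v w hu' hv' hw' huv hvw hneq'
end

section
/- If G is a (P3 ∪ P2)-free graph with ω(G) = 2 (i.e., triangle-free), then χ(G) ≤ 4. -/
open SimpleGraph

section Aux
open SimpleGraph
variable {V : Type*} [Fintype V] {G : SimpleGraph V}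

lemma no_tri_aux (hω : G.cliqueNum = 2) {x y z : V} (hxy : G.Adj x y) (hyz : G.Adj y z)
    (hxz : G.Adj x z) : False := by
  classical
  have h3 : G.IsNClique 3 {x, y, z} := by
    rw [is3Clique_triple_iff]; exact ⟨hxy, hxz, hyz⟩
  have hle : 3 ≤ G.cliqueNum := by
    have := SimpleGraph.IsClique.card_le_cliqueNum (G := G) (t := {x, y, z}) (tc := h3.isClique)
    rwa [h3.card_eq] at this
  omega

end Aux
section Emb
open SimpleGraph
variable {V : Type*} {G : SimpleGraph V}

lemma emb_aux {a b c v w : V} (hab : G.Adj a b) (hbc : G.Adj b c) (hac : ¬ G.Adj a c)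
    (hacne : a ≠ c) (hvw : G.Adj v w)
    (hav : ¬ G.Adj a v) (hbv : ¬ G.Adj b v) (hcv : ¬ G.Adj c v)
    (haw : ¬ G.Adj a w) (hbw : ¬ G.Adj b w) (hcw : ¬ G.Adj c w) :
    Nonempty (P3P2 ↪g G) := by
  classical
  have hvwne : ∀ x : V, ¬ G.Adj x w → v ≠ x := fun x hx h => hx (h ▸ hvw)
  have hwvne : ∀ x : V, ¬ G.Adj x v → w ≠ x := fun x hx h => hx (h ▸ hvw.symm)
  have hva := hvwne a haw; have hvb := hvwne b hbw; have hvc := hvwne c hcw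
  have hwa := hwvne a hav; have hwb := hwvne b hbv; have hwc := hwvne c hcv
  have hca : ¬ G.Adj c a := fun h => hac h.symm
  have hva' : ¬ G.Adj v a := fun h => hav h.symm
  have hvb' : ¬ G.Adj v b := fun h => hbv h.symm
  have hvc' : ¬ G.Adj v c := fun h => hcv h.symm
  have hwa' : ¬ G.Adj w a := fun h => haw h.symm
  have hwb' : ¬ G.Adj w b := fun h => hbw h.symm
  have hwc' : ¬ G.Adj w c := fun h => hcw h.symm
  refine ⟨⟨⟨Sum.elim ![a, b, c] ![v, w], ?_⟩, ?_⟩⟩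
  · intro x y h
    rcases x with x | x <;> rcases y with y | y <;> fin_cases x <;> fin_cases y <;>
      simp_all [hab.ne, hbc.ne, hacne, hvw.ne, hva, hvb, hvc, hwa, hwb, hwc,
        hab.ne', hbc.ne', hvw.ne', hva.symm, hvb.symm, hvc.symm, hwa.symm, hwb.symm, hwc.symm,
        Ne.symm hacne]
  · intro x y
    change G.Adj (Sum.elim ![a, b, c] ![v, w] x) (Sum.elim ![a, b, c] ![v, w] y) ↔ P3P2.Adj x y
    rcases x with x | x <;> rcases y with y | y <;> fin_cases x <;> fin_cases y <;>
      simp [P3P2, pathGraph_adj, hab, hbc, hvw, hac, hav, hbv, hcv, haw, hbw, hcw,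
        hab.symm, hbc.symm, hvw.symm, G.irrefl, hca,
        hva', hvb', hvc', hwa', hwb', hwc']

end Emb
theorem stmt_15 {V : Type*} [Fintype V] (G : SimpleGraph V)
    (hf : _root_.Free P3P2 G) (hω : G.cliqueNum = 2) :
    G.chromaticNumber ≤ (4 : ℕ) := by
  classical
  have hnt : ∀ x y z : V, G.Adj x y → G.Adj y z → G.Adj x z → False :=
    fun x y z h1 h2 h3 => no_tri_aux hω h1 h2 h3
  have hcol : G.Colorable 4 := by
    by_cases hP3 : ∃ a b c : V, G.Adj a b ∧ G.Adj b c ∧ ¬ G.Adj a c ∧ a ≠ c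
    · obtain ⟨a, b, c, hab, hbc, hac, hacne⟩ := hP3
      refine ⟨SimpleGraph.Coloring.mk
        (fun v => if G.Adj a v then 0 else if G.Adj b v then 1 else if G.Adj c v then 2 else 3)
        ?_⟩
      intro v w hvw heq
      split_ifs at heq with h1 h2 h3 h4 h5 h6 h7 h8 h9 h10 h11 h12 h13 h14h15 <;>
        first
          | exact absurd heq (by decide)
          | exact hnt a v w h1 hvw (by assumption)
          | exact hnt b v w (by assumption) hvw (by assumption)
          | exact hnt c v w (by assumption) hvw (by assumption)
          | exact hf (emb_aux hab hbc hac hacne hvw (by assumption) (by assumption)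
              (by assumption) (by assumption) (by assumption) (by assumption))
    · push_neg at hP3
      have hdeg : ∀ v w u : V, G.Adj v w → G.Adj v u → w = u := by
        intro v w u hw hu
        by_contra hne
        have hwu : G.Adj w u := by
          by_contra h
          exact hne (hP3 w v u hw.symm hu h)
        exact hnt w v u hw.symm hu hwu
      set e := (Fintype.equivFin V) with he
      have key : ∀ v w : V, G.Adj v w → e v < e w →
          ((if ∃ u, G.Adj v u ∧ e u < e v then (1 : Fin 4) else 0) = 0 ∧
           (if ∃ u, G.Adj w u ∧ e u < e w then (1 : Fin 4) else 0) = 1) := by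
        intro v w hvw hlt
        constructor
        · rw [if_neg]
          rintro ⟨u, hu, hul⟩
          rw [hdeg v u w hu hvw] at hul
          exact absurd hlt (by omega)
        · exact if_pos ⟨v, hvw.symm, hlt⟩
      refine ⟨SimpleGraph.Coloring.mk
        (fun v => if ∃ u, G.Adj v u ∧ e u < e v then (1 : Fin 4) else 0) ?_⟩
      intro v w hvw heq
      rcases lt_trichotomy (e v) (e w) with h | h | h
      · obtain ⟨h0, h1⟩ := key v w hvw h
        rw [h0, h1] at heq; exact absurd heq (by decide)
      · exact hvw.ne (e.injective (Fin.ext (by omega)))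
      · obtain ⟨h0, h1⟩ := key w v hvw.symm h
        rw [h0, h1] at heq; exact absurd heq (by decide)
  exact hcol.chromaticNumber_le
end

section
/- Let G be a {P3 ∪ P2, 2K1 + Kp}-free graph with p ≥ 2, with maximum clique A = {v1,...,vω}, and suppose the set C_{1,2} of vertices nonadjacent to both v1 and v2 contains a clique S of size at least 2p. If 2p ≤ ω(G) ≤ 3p−2, then every vertex outside A ∪ C_{1,2} that is nonadjacent to at least two vertices of A is adjacent to every vertex of S. -/
open SimpleGraph

-- bound on common neighborhood cliques
lemma aux_common_bound {V : Type*} [Fintype V] {G : SimpleGraph V} {p : ℕ}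
    (hf2 : _root_.Free (twoK1Kp p) G) {a b : V} (hab : a ≠ b) (hnadj : ¬ G.Adj a b)
    {K : Set V} (hK : G.IsClique K) (haK : a ∉ K) (hbK : b ∉ K)
    (hadj : ∀ x ∈ K, G.Adj a x ∧ G.Adj b x) : K.ncard ≤ p - 1 := by
  by_contra hcon
  have hple : p ≤ K.ncard := by omega
  obtain ⟨K', hK'sub, hK'card⟩ := Set.exists_subset_card_eq hple
  have hfin : K'.Finite := Set.toFinite _
  have hcard : hfin.toFinset.card = p := by
    rw [Set.ncard_eq_toFinset_card _ hfin] at hK'card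
    exact hK'card
  let e : hfin.toFinset ≃ Fin p := hfin.toFinset.equivFinOfCardEq hcard
  let k : Fin p → V := fun i => ((e.symm i : hfin.toFinset) : V)
  have hkK : ∀ i, k i ∈ K := by
    intro i
    apply hK'sub
    have h2 := (e.symm i).2
    rw [Set.Finite.mem_toFinset] at h2
    exact h2
  have hkinj : Function.Injective k := by
    intro i j hij
    have : (e.symm i : hfin.toFinset) = e.symm j := Subtype.ext hij
    simpa using e.symm.injective this
  let f : Fin 2 ⊕ Fin p → V := Sum.elim (fun i => if i = 0 then a else b) k
  apply hf2
  refine ⟨⟨⟨f, ?_⟩, ?_⟩⟩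
  · rintro (i | i) (j | j) h
    · fin_cases i <;> fin_cases j <;> simp_all [f]
    · exfalso
      fin_cases i <;> simp [f] at h <;> [exact haK (h ▸ hkK j); exact hbK (h ▸ hkK j)]
    · exfalso
      fin_cases j <;> simp [f] at h <;> [exact haK (h ▸ hkK i); exact hbK (h ▸ hkK i)]
    · exact congrArg (Sum.inr (α := Fin 2)) (hkinj h)
  · rintro (i | i) (j | j) <;>
      simp only [f, Function.Embedding.coeFn_mk, Sum.elim_inl, Sum.elim_inr,
        twoK1Kp, joinG, fromRel_adj]
    · constructor
      · intro h
        exfalso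
        fin_cases i <;> fin_cases j <;> simp_all [G.adj_comm, DFunLike.coe]
      · rintro ⟨-, h | h⟩ <;> simp at h
    · constructor
      · intro _; exact ⟨by simp, Or.inl trivial⟩
      · intro _
        fin_cases i <;> simp
        · exact (hadj _ (hkK j)).1
        · exact (hadj _ (hkK j)).2
    · constructor
      · intro _; exact ⟨by simp, Or.inr trivial⟩
      · intro _
        fin_cases j <;> simp
        · exact ((hadj _ (hkK i)).1).symm
        · exact ((hadj _ (hkK i)).2).symm
    · constructor
      · intro h
        have : i ≠ j := fun hij => G.irrefl (hij ▸ h)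
        exact ⟨by simpa using this, Or.inl (by simpa using this)⟩
      · rintro ⟨hne, -⟩
        have : i ≠ j := by simpa using hne
        exact hK (hkK i) (hkK j) (fun hh => this (hkinj hh))

lemma aux_p3p2 {V : Type*} {G : SimpleGraph V} {u v a t t' : V}
    (huv : G.Adj u v) (hva : G.Adj v a) (hua : ¬ G.Adj u a) (hune : u ≠ a)
    (htt' : G.Adj t t')
    (h1 : ¬ G.Adj t u) (h2 : ¬ G.Adj t v) (h3 : ¬ G.Adj t a)
    (h4 : ¬ G.Adj t' u) (h5 : ¬ G.Adj t' v) (h6 : ¬ G.Adj t' a)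
    (n1 : t ≠ u) (n2 : t ≠ v) (n3 : t ≠ a)
    (n4 : t' ≠ u) (n5 : t' ≠ v) (n6 : t' ≠ a) :
    Nonempty (P3P2 ↪g G) := by
  have huvne := huv.ne
  have hvane := hva.ne
  have htt'ne := htt'.ne
  have g1 : ¬ G.Adj u t := fun h => h1 h.symm
  have g2 : ¬ G.Adj v t := fun h => h2 h.symm
  have g3 : ¬ G.Adj a t := fun h => h3 h.symm
  have g4 : ¬ G.Adj u t' := fun h => h4 h.symm
  have g5 : ¬ G.Adj v t' := fun h => h5 h.symm
  have g6 : ¬ G.Adj a t' := fun h => h6 h.symm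
  have huv' := huv.symm
  have hva' := hva.symm
  have hua' : ¬ G.Adj a u := fun h => hua h.symm
  have htt'' := htt'.symm
  let f : Fin 3 ⊕ Fin 2 → V := Sum.elim ![u, v, a] ![t, t']
  refine ⟨⟨⟨f, ?_⟩, ?_⟩⟩
  · rintro (i | i) (j | j) h <;>
      fin_cases i <;> fin_cases j <;> simp_all [f] <;> tauto
  · rintro (i | i) (j | j) <;> fin_cases i <;> fin_cases j <;>
      simp_all [f, P3P2, pathGraph_adj, Function.Embedding.coeFn_mk, DFunLike.coe]

theorem stmt_16 {V : Type*} [Fintype V] (G : SimpleGraph V) (p : ℕ) (hp : 2 ≤ p)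
    (hf1 : _root_.Free P3P2 G) (hf2 : _root_.Free (twoK1Kp p) G)
    (A : Set V) (hA : G.IsClique A) (hAmax : A.ncard = G.cliqueNum)
    (v1 v2 : V) (hv1 : v1 ∈ A) (hv2 : v2 ∈ A) (hne : v1 ≠ v2)
    (S : Set V) (hSC : ∀ x ∈ S, x ∉ A ∧ ¬ G.Adj x v1 ∧ ¬ G.Adj x v2)
    (hS : G.IsClique S) (hScard : 2 * p ≤ S.ncard)
    (hω1 : 2 * p ≤ G.cliqueNum) (hω2 : G.cliqueNum ≤ 3 * p - 2)
    (a : V) (haA : a ∉ A) (haC : G.Adj a v1 ∨ G.Adj a v2)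
    (ha2 : ∃ u ∈ A, ∃ w ∈ A, u ≠ w ∧ ¬ G.Adj a u ∧ ¬ G.Adj a w) :
    ∀ s ∈ S, G.Adj a s := by
  intro s hs
  by_contra hnas
  have haS : a ∉ S := by
    intro h
    rcases haC with h1 | h1
    · exact (hSC a h).2.1 h1
    · exact (hSC a h).2.2 h1
  obtain ⟨u0, hu0A, w0, hw0A, hu0w0, hau0, haw0⟩ := ha2
  -- any clique's ncard is at most the clique number
  have cliqueBound : ∀ C : Set V, G.IsClique C → C.ncard ≤ G.cliqueNum := by
    intro C hC
    have hCf : C.Finite := Set.toFinite _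
    rw [Set.ncard_eq_toFinset_card _ hCf]
    exact IsClique.card_le_cliqueNum (tc := by rwa [Set.Finite.coe_toFinset])
  -- a has at most p-1 neighbours in A
  have hKA : {x ∈ A | G.Adj a x}.ncard ≤ p - 1 := by
    refine aux_common_bound hf2 (a := a) (b := u0) ?_ hau0
      (hA.subset (Set.sep_subset _ _)) (fun h => haA h.1) (fun h => hau0 h.2) ?_
    · rintro rfl; exact haA hu0A
    · rintro x ⟨hxA, hxa⟩
      refine ⟨hxa, hA hu0A hxA ?_⟩
      rintro rfl; exact hau0 hxa
  -- a has at most p-1 neighbours in S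
  have hKS : {x ∈ S | G.Adj a x}.ncard ≤ p - 1 := by
    refine aux_common_bound hf2 (a := a) (b := s) ?_ hnas
      (hS.subset (Set.sep_subset _ _)) (fun h => haS h.1) (fun h => hnas h.2) ?_
    · rintro rfl; exact haS hs
    · rintro x ⟨hxS, hxa⟩
      refine ⟨hxa, hS hs hxS ?_⟩
      rintro rfl; exact hnas hxa
  -- the set of vertices of A adjacent to everything in S is small
  set B : Set V := {x ∈ A | ∀ z ∈ S, G.Adj x z} with hBdef
  have hSBdisj : Disjoint S B := by
    rw [Set.disjoint_left]
    intro x hxS hxB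
    exact (hSC x hxS).1 hxB.1
  have hSBclique : G.IsClique (S ∪ B) := by
    rintro x (hx | hx) y (hy | hy) hxy
    · exact hS hx hy hxy
    · exact (hy.2 x hx).symm
    · exact hx.2 y hy
    · exact hA hx.1 hy.1 hxy
  have hBcard : B.ncard ≤ p - 2 := by
    have h1 : (S ∪ B).ncard = S.ncard + B.ncard :=
      Set.ncard_union_eq hSBdisj (Set.toFinite _) (Set.toFinite _)
    have h2 := cliqueBound _ hSBclique
    omega
  -- nonneighbours of a in A
  set U : Set V := {x ∈ A | ¬ G.Adj a x} with hUdef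
  have hUcard : p + 1 ≤ U.ncard := by
    have hsplit : {x ∈ A | G.Adj a x} ∪ U = A := by
      ext x
      constructor
      · rintro (h | h) <;> exact h.1
      · intro h
        by_cases hax : G.Adj a x
        · exact Or.inl ⟨h, hax⟩
        · exact Or.inr ⟨h, hax⟩
    have hdisj : Disjoint {x ∈ A | G.Adj a x} U := by
      rw [Set.disjoint_left]
      rintro x ⟨-, h1⟩ ⟨-, h2⟩
      exact h2 h1
    have h1 : ({x ∈ A | G.Adj a x} ∪ U).ncard = {x ∈ A | G.Adj a x}.ncard + U.ncard :=
      Set.ncard_union_eq hdisj (Set.toFinite _) (Set.toFinite _)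
    rw [hsplit] at h1
    have h2 : 2 * p ≤ A.ncard := hAmax ▸ hω1
    omega
  -- choose u in U away from B, v1, v2
  have hXcard : (B ∪ {v1, v2}).ncard ≤ p := by
    have h1 : (B ∪ {v1, v2}).ncard ≤ B.ncard + ({v1, v2} : Set V).ncard :=
      Set.ncard_union_le _ _
    have h2 : ({v1, v2} : Set V).ncard ≤ 2 := by
      apply le_trans (Set.ncard_insert_le _ _)
      simp
    omega
  have hnotsub : ¬ U ⊆ B ∪ {v1, v2} := by
    intro hsub
    have := Set.ncard_le_ncard hsub (Set.toFinite _)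
    omega
  obtain ⟨u, huU, huX⟩ := Set.not_subset.mp hnotsub
  have huA : u ∈ A := huU.1
  have hau : ¬ G.Adj a u := huU.2
  have huB : u ∉ B := fun h => huX (Or.inl h)
  have huv1 : u ≠ v1 := fun h => huX (Or.inr (by simp [h]))
  have huv2 : u ≠ v2 := fun h => huX (Or.inr (by simp [h]))
  have huS : u ∉ S := fun h => (hSC u h).1 huA
  -- u misses some vertex of S, hence has at most p-1 neighbours in S
  have hz : ∃ z ∈ S, ¬ G.Adj u z := by
    by_contra h
    push_neg at h
    exact huB ⟨huA, h⟩
  obtain ⟨z, hzS, huz⟩ := hz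
  have hKu : {x ∈ S | G.Adj u x}.ncard ≤ p - 1 := by
    refine aux_common_bound hf2 (a := u) (b := z) ?_ huz
      (hS.subset (Set.sep_subset _ _)) (fun h => huS h.1) (fun h => huz h.2) ?_
    · rintro rfl; exact huS hzS
    · rintro x ⟨hxS, hxu⟩
      refine ⟨hxu, hS hzS hxS ?_⟩
      rintro rfl; exact huz hxu
  -- two vertices of S nonadjacent to both a and u
  set W : Set V := {x ∈ S | ¬ G.Adj a x ∧ ¬ G.Adj u x} with hWdef
  have hWcard : 2 ≤ W.ncard := by
    have hsub : S ⊆ {x ∈ S | G.Adj a x} ∪ ({x ∈ S | G.Adj u x} ∪ W) := by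
      intro x hx
      by_cases h1 : G.Adj a x
      · exact Or.inl ⟨hx, h1⟩
      by_cases h2 : G.Adj u x
      · exact Or.inr (Or.inl ⟨hx, h2⟩)
      · exact Or.inr (Or.inr ⟨hx, h1, h2⟩)
    have h1 := Set.ncard_le_ncard hsub (Set.toFinite _)
    have h2 : ({x ∈ S | G.Adj a x} ∪ ({x ∈ S | G.Adj u x} ∪ W)).ncard ≤
        {x ∈ S | G.Adj a x}.ncard + ({x ∈ S | G.Adj u x} ∪ W).ncard :=
      Set.ncard_union_le _ _
    have h3 : ({x ∈ S | G.Adj u x} ∪ W).ncard ≤ {x ∈ S | G.Adj u x}.ncard + W.ncard :=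
      Set.ncard_union_le _ _
    omega
  have hW1 : 1 < W.ncard := by omega
  obtain ⟨t, htW, t', ht'W, htt'⟩ := (Set.one_lt_ncard (Set.toFinite _)).mp hW1
  obtain ⟨htS, hat, hut⟩ := htW
  obtain ⟨ht'S, hat', hut'⟩ := ht'W
  have htA : t ∉ A := (hSC t htS).1
  have ht'A : t' ∉ A := (hSC t' ht'S).1
  -- build the forbidden P3 ∪ P2
  apply hf1
  have haup3 : ¬ G.Adj u a := fun h => hau h.symm
  have hadj_tt' : G.Adj t t' := hS htS ht'S htt'
  rcases haC with hav | hav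
  · exact aux_p3p2 (hA huA hv1 huv1) hav.symm haup3
      (fun h => haA (h ▸ huA)) hadj_tt'
      (fun h => hut h.symm) (hSC t htS).2.1 (fun h => hat h.symm)
      (fun h => hut' h.symm) (hSC t' ht'S).2.1 (fun h => hat' h.symm)
      (fun h => htA (h ▸ huA)) (fun h => htA (h ▸ hv1)) (fun h => haS (h ▸ htS))
      (fun h => ht'A (h ▸ huA)) (fun h => ht'A (h ▸ hv1)) (fun h => haS (h ▸ ht'S))
  · exact aux_p3p2 (hA huA hv2 huv2) hav.symm haup3
      (fun h => haA (h ▸ huA)) hadj_tt'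
      (fun h => hut h.symm) (hSC t htS).2.2 (fun h => hat h.symm)
      (fun h => hut' h.symm) (hSC t' ht'S).2.2 (fun h => hat' h.symm)
      (fun h => htA (h ▸ huA)) (fun h => htA (h ▸ hv2)) (fun h => haS (h ▸ htS))
      (fun h => ht'A (h ▸ huA)) (fun h => ht'A (h ▸ hv2)) (fun h => haS (h ▸ ht'S))
end
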